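/- arXiv:2402.01414 — 8 statements merged into one kernel-verified Lean document; each statement's English description precedes it below -/
import Mathlib

section
/- Let L be a distributive lattice and k, n ∈ ℕ with k ≤ n. For all x_1,...,x_n ∈ L, M_k(x_1,...,x_n) = M_k(x_1 ∧ x_2, x_1 ∨ x_2, x_3,...,x_n); that is, the k-th median is invariant under replacing the first two arguments by their meet and join. -/
def median {L : Type*} [DistribLattice L] {n : ℕ} (k : ℕ) (hk1 : 1 ≤ k) (hkn : k ≤ n)
    (x : Fin n → L) : L :=
  ((Finset.univ.powersetCard (n + 1 - k)).attach).sup'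
    (Finset.attach_nonempty_iff.mpr
      (Finset.powersetCard_nonempty.mpr (by simp [Finset.card_univ]; omega)))
    fun s => s.1.inf'
      (Finset.card_pos.mp (by
        have h := (Finset.mem_powersetCard.mp s.2).2
        omega)) x

def medianInf {L : Type*} [DistribLattice L] {n : ℕ} (k : ℕ) (hk1 : 1 ≤ k) (hkn : k ≤ n)
    (x : Fin n → L) : L :=
  ((Finset.univ.powersetCard (n + 1 - k)).attach).inf'
    (Finset.attach_nonempty_iff.mpr
      (Finset.powersetCard_nonempty.mpr (by simp [Finset.card_univ]; omega)))
    fun s => s.1.sup'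
      (Finset.card_pos.mp (by
        have h := (Finset.mem_powersetCard.mp s.2).2
        omega)) x

theorem le_median' {L : Type*} [DistribLattice L] {n : ℕ} (k : ℕ) (hk1 : 1 ≤ k) (hkn : k ≤ n)
    (x : Fin n → L) {s : Finset (Fin n)} (hs : s ∈ Finset.univ.powersetCard (n + 1 - k))
    (hne : s.Nonempty) : s.inf' hne x ≤ median k hk1 hkn x := by
  unfold median
  exact Finset.le_sup'
    (fun t : {t // t ∈ Finset.univ.powersetCard (n + 1 - k)} =>
      t.1.inf' (Finset.card_pos.mp (by
        have h := (Finset.mem_powersetCard.mp t.2).2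
        omega)) x)
    (Finset.mem_attach _ ⟨s, hs⟩)

theorem inf'_eq_of_eq {α β : Type*} [SemilatticeInf α] {s t : Finset β} (h : s = t)
    (hs : s.Nonempty) (ht : t.Nonempty) (f : β → α) : s.inf' hs f = t.inf' ht f := by
  subst h; rfl

/-- Replacing the first two arguments by their meet and join in either order
leaves every median unchanged. -/
theorem median_meet_join_invariant {L : Type*} [DistribLattice L] {n : ℕ}
    (hn : 2 ≤ n) (k : ℕ) (hk1 : 1 ≤ k) (hkn : k ≤ n) (x : Fin n → L) :
    median k hk1 hkn x =
      median k hk1 hkn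
        (Function.update
          (Function.update x ⟨0, by omega⟩ (x ⟨0, by omega⟩ ⊓ x ⟨1, by omega⟩))
          ⟨1, by omega⟩ (x ⟨0, by omega⟩ ⊔ x ⟨1, by omega⟩)) := by
  have h0n : (0:ℕ) < n := by omega
  have h1n : (1:ℕ) < n := by omega
  set i0 : Fin n := ⟨0, h0n⟩ with hi0
  set i1 : Fin n := ⟨1, h1n⟩ with hi1
  have hne01 : i0 ≠ i1 := by simp [hi0, hi1, Fin.ext_iff]
  set a := x i0 with ha
  set b := x i1 with hb
  set y : Fin n → L := Function.update (Function.update x i0 (a ⊓ b)) i1 (a ⊔ b) with hy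
  show median k hk1 hkn x = median k hk1 hkn y
  have hy0 : y i0 = a ⊓ b := by
    rw [hy, Function.update_of_ne hne01, Function.update_self]
  have hy1 : y i1 = a ⊔ b := by rw [hy, Function.update_self]
  have hyi : ∀ i, i ≠ i0 → i ≠ i1 → y i = x i := by
    intro i h h'
    rw [hy, Function.update_of_ne h', Function.update_of_ne h]
  have hcard : ∀ {s : Finset (Fin n)}, s ∈ Finset.univ.powersetCard (n + 1 - k) → s.Nonempty := by
    intro s hs
    have := (Finset.mem_powersetCard.mp hs).2
    exact Finset.card_pos.mp (by omega)
  apply le_antisymm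
  · -- median x ≤ median y
    apply Finset.sup'_le
    rintro ⟨s, hs⟩ -
    have hsne := hcard hs
    by_cases h0s : i0 ∈ s
    · by_cases h1s : i1 ∈ s
      · -- both indices in s : inf'_s x ≤ inf'_s y
        refine le_trans ?_ (le_median' k hk1 hkn y hs hsne)
        apply Finset.le_inf'
        intro i hi
        by_cases e0 : i = i0
        · subst e0; rw [hy0]
          exact le_inf (Finset.inf'_le _ h0s) (Finset.inf'_le _ h1s)
        by_cases e1 : i = i1
        · subst e1; rw [hy1]
          exact le_trans (Finset.inf'_le _ h0s) le_sup_left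
        · rw [hyi i e0 e1]; exact Finset.inf'_le _ hi
      · -- i0 ∈ s, i1 ∉ s : compare with insert i1 (s.erase i0)
        have h1e : i1 ∉ s.erase i0 := fun h => h1s (Finset.mem_of_mem_erase h)
        have hs' : insert i1 (s.erase i0) ∈ Finset.univ.powersetCard (n + 1 - k) := by
          rw [Finset.mem_powersetCard] at hs ⊢
          refine ⟨Finset.subset_univ _, ?_⟩
          rw [Finset.card_insert_of_notMem h1e, Finset.card_erase_of_mem h0s, ← hs.2]
          have : 0 < s.card := Finset.card_pos.mpr hsne
          omega
        refine le_trans ?_ (le_median' k hk1 hkn y hs' ⟨i1, Finset.mem_insert_self _ _⟩)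
        apply Finset.le_inf'
        intro i hi
        rcases Finset.mem_insert.mp hi with rfl | hi'
        · rw [hy1]
          exact le_trans (Finset.inf'_le _ h0s) le_sup_left
        · have hi0 : i ≠ i0 := (Finset.mem_erase.mp hi').1
          have hi1 : i ≠ i1 := fun h => h1s (h ▸ (Finset.mem_erase.mp hi').2)
          rw [hyi i hi0 hi1]
          exact Finset.inf'_le _ (Finset.mem_erase.mp hi').2
    · -- i0 ∉ s : pointwise inf'_s x ≤ inf'_s y
      refine le_trans ?_ (le_median' k hk1 hkn y hs hsne)
      apply Finset.le_inf'
      intro i hi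
      have e0 : i ≠ i0 := fun h => h0s (h ▸ hi)
      by_cases e1 : i = i1
      · subst e1; rw [hy1]
        exact le_trans (Finset.inf'_le _ hi) le_sup_right
      · rw [hyi i e0 e1]; exact Finset.inf'_le _ hi
  · -- median y ≤ median x
    apply Finset.sup'_le
    rintro ⟨s, hs⟩ -
    have hsne := hcard hs
    by_cases h1s : i1 ∈ s
    · by_cases h0s : i0 ∈ s
      · -- both : pointwise inf'_s y ≤ inf'_s x
        refine le_trans ?_ (le_median' k hk1 hkn x hs hsne)
        apply Finset.le_inf'
        intro i hi
        by_cases e0 : i = i0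
        · subst e0
          exact le_trans (Finset.inf'_le _ h0s) (by rw [hy0]; exact inf_le_left)
        by_cases e1 : i = i1
        · subst e1
          exact le_trans (Finset.inf'_le _ h0s) (by rw [hy0]; exact inf_le_right)
        · exact le_trans (Finset.inf'_le _ hi) (le_of_eq (hyi i e0 e1))
      · -- hard case : i1 ∈ s, i0 ∉ s
        set t := s.erase i1 with htdef
        have hts : s = insert i1 t := (Finset.insert_erase h1s).symm
        have h0t : i0 ∉ t := fun h => h0s (Finset.mem_of_mem_erase h)
        have hs' : insert i0 t ∈ Finset.univ.powersetCard (n + 1 - k) := by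
          rw [Finset.mem_powersetCard] at hs ⊢
          refine ⟨Finset.subset_univ _, ?_⟩
          rw [Finset.card_insert_of_notMem h0t, htdef, Finset.card_erase_of_mem h1s, ← hs.2]
          have : 0 < s.card := Finset.card_pos.mpr hsne
          omega
        have hytx : ∀ i ∈ t, y i = x i := by
          intro i hi
          exact hyi i (fun h => h0t (h ▸ hi)) (Finset.ne_of_mem_erase hi)
        rcases t.eq_empty_or_nonempty with hte | htne
        · -- s = {i1}
          have hs1 : s = {i1} := by rw [hts, hte]; rfl
          have hv : s.inf' hsne y = a ⊔ b := by
            rw [inf'_eq_of_eq hs1 hsne (Finset.singleton_nonempty i1) y,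
              Finset.inf'_singleton, hy1]
          have hv0 : insert i0 t = {i0} := by rw [hte]; rfl
          rw [hv]
          apply sup_le
          · have h := le_median' k hk1 hkn x hs' (hcard hs')
            rwa [inf'_eq_of_eq hv0 (hcard hs') (Finset.singleton_nonempty i0) x,
              Finset.inf'_singleton] at h
          · have h := le_median' k hk1 hkn x hs hsne
            rwa [inf'_eq_of_eq hs1 hsne (Finset.singleton_nonempty i1) x,
              Finset.inf'_singleton] at h
        · -- t nonempty : use distributivity
          have hins : (insert i1 t).Nonempty := Finset.insert_nonempty _ _
          have e1 : s.inf' hsne y = (a ⊔ b) ⊓ t.inf' htne y := by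
            rw [inf'_eq_of_eq hts hsne hins y, Finset.inf'_insert (H := htne), hy1]
          have e2 : t.inf' htne y = t.inf' htne x := Finset.inf'_congr htne rfl hytx
          have e3 : s.inf' hsne x = b ⊓ t.inf' htne x := by
            rw [inf'_eq_of_eq hts hsne hins x, Finset.inf'_insert (H := htne), hb]
          have e4 : (insert i0 t).inf' (hcard hs') x = a ⊓ t.inf' htne x := by
            rw [Finset.inf'_insert (H := htne), ha]
          rw [e1, e2, inf_sup_right]
          apply sup_le
          · exact le_trans (le_of_eq e4.symm) (le_median' k hk1 hkn x hs' (hcard hs'))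
          · exact le_trans (le_of_eq e3.symm) (le_median' k hk1 hkn x hs hsne)
    · -- i1 ∉ s : pointwise inf'_s y ≤ inf'_s x
      refine le_trans ?_ (le_median' k hk1 hkn x hs hsne)
      apply Finset.le_inf'
      intro i hi
      by_cases e0 : i = i0
      · subst e0
        exact le_trans (Finset.inf'_le _ hi) (by rw [hy0]; exact inf_le_left)
      · have e1 : i ≠ i1 := fun h => h1s (h ▸ hi)
        exact le_trans (Finset.inf'_le _ hi) (le_of_eq (hyi i e0 e1))
end

section
/- Let L be a distributive lattice, A a nonempty set, n ≥ 2, and T : L^n → A a map. Then T is total orderization invariant if and only if T is symmetric and T(x_1, x_2, x_3,...,x_n) = T(x_1 ∧ x_2, x_1 ∨ x_2, x_3,...,x_n) holds for all x_1,...,x_n ∈ L. -/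
def TotalOrderizationInvariant {L : Type*} [DistribLattice L] {A : Type*} {n : ℕ}
    (T : (Fin n → L) → A) : Prop :=
  ∀ x : Fin n → L,
    T x = T fun k => median (k.1 + 1) (Nat.succ_le_succ (Nat.zero_le _)) k.2 x

/-- `T` is symmetric: invariant under every permutation of its arguments. -/
def IsSymmetricMap {L A : Type*} {n : ℕ} (T : (Fin n → L) → A) : Prop :=
  ∀ (σ : Equiv.Perm (Fin n)) (x : Fin n → L), T (x ∘ σ) = T x

set_option linter.unusedSectionVars false



section
variable {α : Type*} [DistribLattice α] [BoundedOrder α] {n : ℕ}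

def msup (m : ℕ) (x : Fin n → α) : α :=
  (Finset.univ.powersetCard m).sup fun S => S.inf x

lemma inf_eq_of_mem {S : Finset (Fin n)} {i : Fin n} (hi : i ∈ S) (f : Fin n → α) :
    S.inf f = f i ⊓ (S.erase i).inf f := by
  rw [← Finset.inf_insert, Finset.insert_erase hi]

lemma msup_perm (m : ℕ) (σ : Equiv.Perm (Fin n)) (x : Fin n → α) :
    msup m (x ∘ σ) = msup m x := by
  unfold msup
  apply le_antisymm <;> refine Finset.sup_le fun S hS => ?_
  · have h1 : S.image σ ∈ Finset.univ.powersetCard m := by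
      simp only [Finset.mem_powersetCard] at hS ⊢
      exact ⟨Finset.subset_univ _, by rw [Finset.card_image_of_injective _ σ.injective, hS.2]⟩
    have h2 : S.inf (x ∘ σ) = (S.image σ).inf x := (Finset.inf_image _ _ _).symm
    rw [h2]; exact Finset.le_sup h1
  · have h1 : S.image σ.symm ∈ Finset.univ.powersetCard m := by
      simp only [Finset.mem_powersetCard] at hS ⊢
      exact ⟨Finset.subset_univ _,
        by rw [Finset.card_image_of_injective _ σ.symm.injective, hS.2]⟩
    have h2 : S.inf x = (S.image σ.symm).inf (x ∘ σ) := by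
      rw [Finset.inf_image]
      apply Finset.inf_congr rfl
      intro t _
      simp
    rw [h2]; exact Finset.le_sup h1

end

section
variable {α : Type*} [DistribLattice α] [BoundedOrder α] {n : ℕ}

def cmp' (i j : Fin n) (x : Fin n → α) : Fin n → α :=
  Function.update (Function.update x i (x i ⊓ x j)) j (x i ⊔ x j)

lemma key_both (a b r : α) : (a ⊓ b) ⊓ ((a ⊔ b) ⊓ r) = a ⊓ (b ⊓ r) := by
  have h : (a ⊓ b) ⊓ (a ⊔ b) = a ⊓ b :=
    inf_eq_left.mpr (inf_le_left.trans le_sup_left)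
  calc (a ⊓ b) ⊓ ((a ⊔ b) ⊓ r) = ((a ⊓ b) ⊓ (a ⊔ b)) ⊓ r := (inf_assoc _ _ _).symm
    _ = (a ⊓ b) ⊓ r := by rw [h]
    _ = a ⊓ (b ⊓ r) := inf_assoc a b r

lemma msup_cmp (m : ℕ) {i j : Fin n} (hij : i ≠ j) (x : Fin n → α) :
    msup m (cmp' i j x) = msup m x := by
  set y := cmp' i j x with hy
  have hyj : y j = x i ⊔ x j := by simp [hy, cmp']
  have hyi : y i = x i ⊓ x j := by simp [hy, cmp', Function.update_apply, hij]
  have hyt : ∀ t, t ≠ i → t ≠ j → y t = x t := by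
    intro t h1 h2; simp [hy, cmp', Function.update_apply, h1, h2]
  unfold msup
  apply le_antisymm <;> refine Finset.sup_le fun S hS => ?_
  · by_cases hi : i ∈ S <;> by_cases hj : j ∈ S
    · -- both
      have hje : j ∈ S.erase i := Finset.mem_erase.mpr ⟨fun h => hij h.symm, hj⟩
      have e1 : S.inf y = y i ⊓ ((S.erase i).inf y) := inf_eq_of_mem hi y
      have e2 : (S.erase i).inf y = y j ⊓ (((S.erase i).erase j).inf y) := inf_eq_of_mem hje y
      have e3 : ((S.erase i).erase j).inf y = ((S.erase i).erase j).inf x := by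
        apply Finset.inf_congr rfl
        intro t ht
        have h2 := Finset.mem_erase.mp ht
        have h1 := Finset.mem_erase.mp h2.2
        exact hyt t h1.1 h2.1
      have e1' : S.inf x = x i ⊓ ((S.erase i).inf x) := inf_eq_of_mem hi x
      have e2' : (S.erase i).inf x = x j ⊓ (((S.erase i).erase j).inf x) := inf_eq_of_mem hje x
      have : S.inf y = S.inf x := by
        rw [e1, e2, e3, hyi, hyj, e1', e2', key_both]
      rw [this]; exact Finset.le_sup hS
    · -- i only
      have e1 : S.inf y = y i ⊓ ((S.erase i).inf y) := inf_eq_of_mem hi y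
      have e3 : (S.erase i).inf y = (S.erase i).inf x := by
        apply Finset.inf_congr rfl
        intro t ht
        exact hyt t (Finset.mem_erase.mp ht).1 (fun h => hj (h ▸ (Finset.mem_erase.mp ht).2))
      have e1' : S.inf x = x i ⊓ ((S.erase i).inf x) := inf_eq_of_mem hi x
      have : S.inf y ≤ S.inf x := by
        rw [e1, e3, e1', hyi]
        exact inf_le_inf_right _ inf_le_left
      exact this.trans (Finset.le_sup hS)
    · -- j only
      have e1 : S.inf y = y j ⊓ ((S.erase j).inf y) := inf_eq_of_mem hj y
      have e3 : (S.erase j).inf y = (S.erase j).inf x := by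
        apply Finset.inf_congr rfl
        intro t ht
        exact hyt t (fun h => hi (h ▸ (Finset.mem_erase.mp ht).2)) (Finset.mem_erase.mp ht).1
      set R := (S.erase j).inf x with hR
      have e2 : S.inf y = (x i ⊓ R) ⊔ (x j ⊓ R) := by
        rw [e1, e3, hyj, inf_sup_right]
      have hin : i ∉ S.erase j := fun h => hi (Finset.mem_of_mem_erase h)
      have hS' : insert i (S.erase j) ∈ Finset.univ.powersetCard m := by
        simp only [Finset.mem_powersetCard] at hS ⊢
        refine ⟨Finset.subset_univ _, ?_⟩
        rw [Finset.card_insert_of_notMem hin, Finset.card_erase_add_one hj, hS.2]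
      have t1 : x i ⊓ R = (insert i (S.erase j)).inf x := (Finset.inf_insert).symm
      have t2 : x j ⊓ R = S.inf x := (inf_eq_of_mem hj x).symm
      rw [e2, t1, t2]
      exact sup_le (Finset.le_sup hS') (Finset.le_sup hS)
    · -- neither
      have : S.inf y = S.inf x := by
        apply Finset.inf_congr rfl
        intro t ht
        exact hyt t (fun h => hi (h ▸ ht)) (fun h => hj (h ▸ ht))
      rw [this]; exact Finset.le_sup hS
  · by_cases hi : i ∈ S <;> by_cases hj : j ∈ S
    · -- both
      have hje : j ∈ S.erase i := Finset.mem_erase.mpr ⟨fun h => hij h.symm, hj⟩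
      have e3 : ((S.erase i).erase j).inf y = ((S.erase i).erase j).inf x := by
        apply Finset.inf_congr rfl
        intro t ht
        have h2 := Finset.mem_erase.mp ht
        have h1 := Finset.mem_erase.mp h2.2
        exact hyt t h1.1 h2.1
      have : S.inf x = S.inf y := by
        rw [inf_eq_of_mem hi y, inf_eq_of_mem hje y, e3, hyi, hyj,
          inf_eq_of_mem hi x, inf_eq_of_mem hje x, key_both]
      rw [this]; exact Finset.le_sup hS
    · -- i only: S.inf x = x i ⊓ R ≤ (x i ⊔ x j) ⊓ R = inf over insert j (S.erase i) of y
      have e3 : (S.erase i).inf y = (S.erase i).inf x := by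
        apply Finset.inf_congr rfl
        intro t ht
        exact hyt t (Finset.mem_erase.mp ht).1 (fun h => hj (h ▸ (Finset.mem_erase.mp ht).2))
      have hjn : j ∉ S.erase i := fun h => hj (Finset.mem_of_mem_erase h)
      have hS' : insert j (S.erase i) ∈ Finset.univ.powersetCard m := by
        simp only [Finset.mem_powersetCard] at hS ⊢
        refine ⟨Finset.subset_univ _, ?_⟩
        rw [Finset.card_insert_of_notMem hjn, Finset.card_erase_add_one hi, hS.2]
      have t1 : (insert j (S.erase i)).inf y = (x i ⊔ x j) ⊓ (S.erase i).inf x := by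
        rw [Finset.inf_insert, e3, hyj]
      have : S.inf x ≤ (insert j (S.erase i)).inf y := by
        rw [inf_eq_of_mem hi x, t1]
        exact inf_le_inf_right _ le_sup_left
      exact this.trans (Finset.le_sup hS')
    · -- j only
      have e3 : (S.erase j).inf y = (S.erase j).inf x := by
        apply Finset.inf_congr rfl
        intro t ht
        exact hyt t (fun h => hi (h ▸ (Finset.mem_of_mem_erase ht))) (Finset.mem_erase.mp ht).1
      have : S.inf x ≤ S.inf y := by
        rw [inf_eq_of_mem hj x, inf_eq_of_mem hj y, e3, hyj]
        exact inf_le_inf_right _ le_sup_right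
      exact this.trans (Finset.le_sup hS)
    · -- neither
      have : S.inf x = S.inf y := by
        apply Finset.inf_congr rfl
        intro t ht
        exact (hyt t (fun h => hi (h ▸ ht)) (fun h => hj (h ▸ ht))).symm
      rw [this]; exact Finset.le_sup hS

end

section
variable {α : Type*} [DistribLattice α] [BoundedOrder α] {n : ℕ}

lemma msup_monotone {y : Fin n → α} (hy : Monotone y) (k : Fin n) :
    msup (n - k.1) y = y k := by
  unfold msup
  apply le_antisymm
  · refine Finset.sup_le fun S hS => ?_
    -- find i ∈ S with i ≤ k
    have hcard := (Finset.mem_powersetCard.mp hS).2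
    by_contra hcon
    -- S and the set of indices ≤ k intersect
    set Sk : Finset (Fin n) := (Finset.univ : Finset (Fin (k.1+1))).image
      (fun t => (⟨t.1, by omega⟩ : Fin n)) with hSk
    have hSkcard : Sk.card = k.1 + 1 := by
      rw [hSk, Finset.card_image_of_injective _ (fun a b hab => Fin.ext (by
        simpa using congrArg Fin.val hab)), Finset.card_univ, Fintype.card_fin]
    have hdisj : Disjoint S Sk := by
      rw [Finset.disjoint_left]
      intro i hiS hiSk
      obtain ⟨t, _, ht⟩ := Finset.mem_image.mp hiSk
      have hik : i ≤ k := by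
        have h1 : i.1 = t.1 := by rw [← ht]
        have h2 : t.1 < k.1 + 1 := t.2
        exact Fin.le_def.mpr (by omega)
      exact hcon ((Finset.inf_le hiS).trans (hy hik))
    have := Finset.card_union_of_disjoint hdisj
    have hle := Finset.card_le_univ (S ∪ Sk)
    rw [this, hcard, hSkcard] at hle
    simp only [Finset.card_univ, Fintype.card_fin] at hle
    omega
  · -- the set {k, ..., n-1}
    set S : Finset (Fin n) := (Finset.univ : Finset (Fin (n - k.1))).image
      (fun t => (⟨k.1 + t.1, by omega⟩ : Fin n)) with hSdef
    have hinj : Function.Injective (fun t : Fin (n - k.1) => (⟨k.1 + t.1, by omega⟩ : Fin n)) := by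
      intro a b hab
      have := congrArg Fin.val hab
      simp only at this
      exact Fin.ext (by omega)
    have hS : S ∈ Finset.univ.powersetCard (n - k.1) := by
      rw [Finset.mem_powersetCard]
      exact ⟨Finset.subset_univ _, by
        rw [hSdef, Finset.card_image_of_injective _ hinj, Finset.card_univ, Fintype.card_fin]⟩
    refine le_trans ?_ (Finset.le_sup hS)
    refine Finset.le_inf fun i hi => ?_
    obtain ⟨t, _, ht⟩ := Finset.mem_image.mp hi
    have : k ≤ i := by
      have : k.1 + t.1 = i.1 := congrArg Fin.val ht
      exact Fin.le_def.mpr (by omega)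
    exact hy this

end

section Transfer
variable {L : Type*} [DistribLattice L] {n : ℕ}

def cc (a : L) : WithBot (WithTop L) := ((a : WithTop L) : WithBot (WithTop L))

lemma cc_inj : Function.Injective (cc (L := L)) := by
  intro a b hab
  have := WithBot.coe_injective hab
  exact WithTop.coe_injective this

lemma cc_sup (a b : L) : cc (a ⊔ b) = cc a ⊔ cc b := by
  unfold cc; rw [WithTop.coe_sup, WithBot.coe_sup]

lemma cc_inf (a b : L) : cc (a ⊓ b) = cc a ⊓ cc b := by
  unfold cc; rw [WithTop.coe_inf, WithBot.coe_inf]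

lemma cc_le_cc {a b : L} (h : a ≤ b) : cc a ≤ cc b := by
  simp only [cc, WithBot.coe_le_coe, WithTop.coe_le_coe]
  exact h

lemma cc_median (k : ℕ) (hk1 : 1 ≤ k) (hkn : k ≤ n) (x : Fin n → L) :
    cc (median k hk1 hkn x) = msup (n + 1 - k) (cc ∘ x) := by
  unfold median msup
  rw [Finset.comp_sup'_eq_sup'_comp _ cc cc_sup]
  have : ∀ s : {s // s ∈ Finset.univ.powersetCard (n + 1 - k)},
      (cc ∘ fun s : {s // s ∈ Finset.univ.powersetCard (n + 1 - k)} => s.1.inf'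
        (Finset.card_pos.mp (by
          have h := (Finset.mem_powersetCard.mp s.2).2
          omega)) x) s = s.1.inf (cc ∘ x) := by
    intro s
    simp only [Function.comp_apply]
    rw [Finset.apply_inf'_eq_inf'_comp _ cc cc_inf, Finset.inf'_eq_inf]
  rw [Finset.sup'_congr _ rfl (fun s _ => this s), Finset.sup'_eq_sup]
  exact Finset.sup_attach _ _

end Transfer

namespace TOIProof

def cmp {L : Type*} [Lattice L] {n : ℕ} (i j : Fin n) (x : Fin n → L) : Fin n → L :=
  Function.update (Function.update x i (x i ⊓ x j)) j (x i ⊔ x j)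

section CmpBasic
variable {L : Type*} [Lattice L] {n : ℕ}

@[simp] lemma cmp_apply_j (i j : Fin n) (x : Fin n → L) : cmp i j x j = x i ⊔ x j := by
  simp [cmp]

lemma cmp_apply_i (i j : Fin n) (hij : i ≠ j) (x : Fin n → L) :
    cmp i j x i = x i ⊓ x j := by
  simp [cmp, Function.update_apply, hij]

lemma cmp_apply_other {i j t : Fin n} (h1 : t ≠ i) (h2 : t ≠ j) (x : Fin n → L) :
    cmp i j x t = x t := by
  simp [cmp, Function.update_apply, h1, h2]

lemma cmp_le {i j : Fin n} {x : Fin n → L} {c : L} (h : ∀ t, x t ≤ c) :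
    ∀ t, cmp i j x t ≤ c := by
  intro t
  by_cases h2 : t = j
  · subst h2; simp [h]
  · by_cases h1 : t = i
    · subst h1; simp [cmp, Function.update_apply, h2, inf_le_left.trans (h t)]
    · rw [cmp_apply_other h1 h2]; exact h t

end CmpBasic

section MedVec
variable {L : Type*} [DistribLattice L] {n : ℕ}

def medvec (x : Fin n → L) : Fin n → L :=
  fun k => median (k.1 + 1) (Nat.succ_le_succ (Nat.zero_le _)) k.2 x

lemma cc_medvec (x : Fin n → L) (k : Fin n) :
    cc (medvec x k) = msup (n - k.1) (cc ∘ x) := by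
  unfold medvec
  rw [cc_median]
  congr 1
  omega

lemma medvec_perm (σ : Equiv.Perm (Fin n)) (x : Fin n → L) :
    medvec (x ∘ σ) = medvec x := by
  funext k
  apply cc_inj
  rw [cc_medvec, cc_medvec]
  have : cc ∘ (x ∘ σ) = (cc ∘ x) ∘ σ := rfl
  rw [this, msup_perm]

lemma medvec_cmp {i j : Fin n} (hij : i ≠ j) (x : Fin n → L) :
    medvec (cmp i j x) = medvec x := by
  funext k
  apply cc_inj
  rw [cc_medvec, cc_medvec]
  have hc : cc ∘ (cmp i j x) = cmp' i j (cc ∘ x) := by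
    funext t
    by_cases h2 : t = j
    · subst h2
      simp only [Function.comp_apply, cmp_apply_j]
      rw [cc_sup]
      simp [cmp']
    · by_cases h1 : t = i
      · subst h1
        simp only [Function.comp_apply, cmp_apply_i _ _ hij]
        rw [cc_inf]
        simp [cmp', Function.update_apply, hij, h2]
      · simp only [Function.comp_apply, cmp_apply_other h1 h2]
        simp [cmp', Function.update_apply, h1, h2]
  rw [hc, msup_cmp _ hij]

lemma medvec_monotone {y : Fin n → L} (hy : Monotone y) : medvec y = y := by
  funext k
  apply cc_inj
  rw [cc_medvec]
  exact msup_monotone (fun a b hab => cc_le_cc (hy hab)) k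

end MedVec

end TOIProof

namespace TOIProof

section Reach
variable {L : Type*} [DistribLattice L] {n : ℕ}

inductive Reach : (Fin n → L) → (Fin n → L) → Prop
  | refl (x : Fin n → L) : Reach x x
  | step {x y : Fin n → L} (i j : Fin n) (hij : i ≠ j) (h : Reach x y) : Reach x (cmp i j y)

lemma Reach.trans {x y z : Fin n → L} (h1 : Reach x y) (h2 : Reach y z) : Reach x z := by
  induction h2 with
  | refl => exact h1
  | step i j hij _ ih => exact Reach.step i j hij ih

lemma Reach.bound {x y : Fin n → L} (h : Reach x y) {c : L} (hb : ∀ t, x t ≤ c) :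
    ∀ t, y t ≤ c := by
  induction h with
  | refl => exact hb
  | step i j hij _ ih => exact cmp_le ih

lemma Reach.medvec_eq {x y : Fin n → L} (h : Reach x y) : medvec x = medvec y := by
  induction h with
  | refl => rfl
  | step i j hij _ ih => rw [ih, medvec_cmp hij]

lemma Reach.T_eq {A : Type*} {T : (Fin n → L) → A}
    (hT : ∀ (i j : Fin n), i ≠ j → ∀ w, T (cmp i j w) = T w)
    {x y : Fin n → L} (h : Reach x y) : T x = T y := by
  induction h with
  | refl => rfl
  | step i j hij _ ih => rw [ih, hT i j hij]

lemma Reach.snoc {m : ℕ} {z z' : Fin m → L} (h : Reach z z') (c : L) :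
    Reach (Fin.snoc z c) (Fin.snoc z' c) := by
  induction h with
  | refl => exact Reach.refl _
  | step i j hij hr ih =>
    have key : ∀ (w : Fin m → L),
        (Fin.snoc (cmp i j w) c : Fin (m+1) → L) = cmp i.castSucc j.castSucc (Fin.snoc w c) := by
      intro w
      funext t
      refine Fin.lastCases ?_ ?_ t
      · rw [Fin.snoc_last]
        rw [cmp_apply_other (by exact (Fin.castSucc_lt_last i).ne') (by exact (Fin.castSucc_lt_last j).ne')]
        rw [Fin.snoc_last]
      · intro s
        rw [Fin.snoc_castSucc]
        by_cases h2 : s = j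
        · subst h2
          rw [cmp_apply_j, cmp_apply_j, Fin.snoc_castSucc, Fin.snoc_castSucc]
        · by_cases h1 : s = i
          · subst h1
            rw [cmp_apply_i _ _ hij, cmp_apply_i _ _ (by simpa using hij),
              Fin.snoc_castSucc, Fin.snoc_castSucc]
          · rw [cmp_apply_other h1 h2, cmp_apply_other
              (fun hc => h1 (Fin.castSucc_injective _ hc))
              (fun hc => h2 (Fin.castSucc_injective _ hc)), Fin.snoc_castSucc]
    rw [key]
    exact Reach.step _ _ (by simpa using hij) ih

end Reach

end TOIProof

namespace TOIProof

section Sorting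
variable {L : Type*} [DistribLattice L]

lemma pass {m : ℕ} (x : Fin (m + 1) → L) :
    ∃ y, Reach x y ∧ ∀ t, y t ≤ y (Fin.last m) := by
  suffices h : ∀ p, ∀ _ : p ≤ m, ∃ y, Reach x y ∧
      (∀ t : Fin (m + 1), t.1 ≤ p → y t ≤ y ⟨p, by omega⟩) ∧
      (∀ t : Fin (m + 1), p < t.1 → y t = x t) by
    obtain ⟨y, h1, h2, _⟩ := h m le_rfl
    exact ⟨y, h1, fun t => h2 t (Nat.lt_succ_iff.mp t.isLt)⟩
  intro p
  induction p with
  | zero =>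
    intro _
    refine ⟨x, Reach.refl x, ?_, fun t _ => rfl⟩
    intro t ht
    have : t = ⟨0, by omega⟩ := Fin.ext (by simp only [Fin.val_mk]; omega)
    rw [this]
  | succ q ihq =>
    intro hq
    obtain ⟨y, hr, hb, he⟩ := ihq (by omega)
    have hqm : q < m + 1 := by omega
    have hq1m : q + 1 < m + 1 := by omega
    set i : Fin (m + 1) := ⟨q, hqm⟩ with hi
    set j : Fin (m + 1) := ⟨q + 1, hq1m⟩ with hj
    have hij : i ≠ j := by
      intro hc
      have := congrArg Fin.val hc
      simp [hi, hj] at this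
    refine ⟨cmp i j y, Reach.step i j hij hr, ?_, ?_⟩
    · intro t ht
      show cmp i j y t ≤ cmp i j y j
      rw [cmp_apply_j]
      by_cases h2 : t = j
      · rw [h2, cmp_apply_j]
      · by_cases h1 : t = i
        · rw [h1, cmp_apply_i _ _ hij]
          exact inf_le_left.trans le_sup_left
        · rw [cmp_apply_other h1 h2]
          have ht' : t.1 ≤ q := by
            have : t.1 ≠ q + 1 := fun hc => h2 (Fin.ext hc)
            omega
          exact (hb t ht').trans le_sup_left
    · intro t ht
      have h1 : t ≠ i := by
        intro hc
        have := congrArg Fin.val hc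
        simp [hi] at this
        omega
      have h2 : t ≠ j := by
        intro hc
        have := congrArg Fin.val hc
        simp [hj] at this
        omega
      rw [cmp_apply_other h1 h2]
      exact he t (by omega)

lemma sort : ∀ {n : ℕ} (x : Fin n → L), ∃ y, Reach x y ∧ Monotone y := by
  intro n
  induction n with
  | zero =>
    intro x
    exact ⟨x, Reach.refl x, fun a _ _ => a.elim0⟩
  | succ m ih =>
    intro x
    obtain ⟨y1, hr1, hb1⟩ := pass x
    set z : Fin m → L := y1 ∘ Fin.castSucc with hz
    obtain ⟨z', hrz, hmz⟩ := ih z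
    have hx1 : y1 = Fin.snoc z (y1 (Fin.last m)) := by
      funext t
      refine Fin.lastCases ?_ ?_ t
      · rw [Fin.snoc_last]
      · intro s
        rw [Fin.snoc_castSucc]
        rfl
    have hr2 : Reach y1 (Fin.snoc z' (y1 (Fin.last m))) := by
      have h := hrz.snoc (y1 (Fin.last m))
      rwa [← hx1] at h
    have hb' : ∀ t, z' t ≤ y1 (Fin.last m) :=
      hrz.bound (fun t => hb1 (Fin.castSucc t))
    refine ⟨Fin.snoc z' (y1 (Fin.last m)), hr1.trans hr2, ?_⟩
    intro a b hab
    by_cases hbm : b.1 = m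
    · have hb2 : b = Fin.last m := Fin.ext hbm
      subst hb2
      rw [Fin.snoc_last]
      by_cases ham : a.1 = m
      · have : a = Fin.last m := Fin.ext ham
        rw [this, Fin.snoc_last]
      · have ha : a = Fin.castSucc ⟨a.1, by omega⟩ := Fin.ext rfl
        rw [ha, Fin.snoc_castSucc]
        exact hb' _
    · have hbl : b.1 < m := by
        have := b.2
        omega
      have hal : a.1 < m := lt_of_le_of_lt (Fin.le_def.mp hab) hbl
      have ha : a = Fin.castSucc ⟨a.1, hal⟩ := Fin.ext rfl
      have hbb : b = Fin.castSucc ⟨b.1, hbl⟩ := Fin.ext rfl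
      rw [ha, hbb, Fin.snoc_castSucc, Fin.snoc_castSucc]
      exact hmz (Fin.le_def.mpr (Fin.le_def.mp hab))

end Sorting

end TOIProof

namespace TOIProof

variable {L : Type*} [DistribLattice L] {A : Type*} {n : ℕ}

lemma T_cmp (hn : 2 ≤ n) {T : (Fin n → L) → A} (hsymm : IsSymmetricMap T)
    (hmj : ∀ x : Fin n → L,
      T x = T (Function.update
        (Function.update x ⟨0, by linarith⟩ (x ⟨0, by linarith⟩ ⊓ x ⟨1, by linarith⟩))
        ⟨1, by linarith⟩ (x ⟨0, by linarith⟩ ⊔ x ⟨1, by linarith⟩)))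
    {i j : Fin n} (hij : i ≠ j) (x : Fin n → L) :
    T (cmp i j x) = T x := by
  set i0 : Fin n := ⟨0, by omega⟩ with hi0
  set i1 : Fin n := ⟨1, by omega⟩ with hi1
  have h01 : i0 ≠ i1 := by
    intro hc
    have := congrArg Fin.val hc
    simp [hi0, hi1] at this
  set τ : Equiv.Perm (Fin n) := Equiv.swap i0 i with hτ
  have hτj : τ j ≠ i0 := by
    intro hc
    have h' : τ (τ j) = j := Equiv.swap_apply_self _ _ _
    rw [hc, hτ, Equiv.swap_apply_left] at h'
    exact hij h'
  set ρ : Equiv.Perm (Fin n) := Equiv.swap i1 (τ j) with hρ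
  set σ : Equiv.Perm (Fin n) := ρ.trans τ with hσ
  have hσ0 : σ i0 = i := by
    rw [hσ, Equiv.trans_apply, hρ, Equiv.swap_apply_of_ne_of_ne h01 (Ne.symm hτj)]
    · rw [hτ, Equiv.swap_apply_left]
  have hσ1 : σ i1 = j := by
    rw [hσ, Equiv.trans_apply, hρ, Equiv.swap_apply_left, hτ, Equiv.swap_apply_self]
  have hmj' := hmj (x ∘ σ)
  have hkey : (cmp i j x) ∘ σ = cmp i0 i1 (x ∘ σ) := by
    funext t
    by_cases h2 : t = i1
    · subst h2
      show cmp i j x (σ i1) = cmp i0 i1 (x ∘ σ) i1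
      rw [hσ1, cmp_apply_j, cmp_apply_j]
      simp only [Function.comp_apply, hσ0, hσ1]
    · by_cases h1 : t = i0
      · subst h1
        show cmp i j x (σ i0) = cmp i0 i1 (x ∘ σ) i0
        rw [hσ0, cmp_apply_i _ _ hij, cmp_apply_i _ _ h01]
        simp only [Function.comp_apply, hσ0, hσ1]
      · have hs1 : σ t ≠ i := fun hc => h1 (σ.injective (hc.trans hσ0.symm))
        have hs2 : σ t ≠ j := fun hc => h2 (σ.injective (hc.trans hσ1.symm))
        show cmp i j x (σ t) = cmp i0 i1 (x ∘ σ) t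
        rw [cmp_apply_other hs1 hs2, cmp_apply_other h1 h2]
        rfl
  calc T (cmp i j x) = T ((cmp i j x) ∘ σ) := (hsymm σ _).symm
    _ = T (cmp i0 i1 (x ∘ σ)) := by rw [hkey]
    _ = T (x ∘ σ) := hmj'.symm
    _ = T x := hsymm σ x

theorem toi_iff_symm_and_meetJoin' [Nonempty A]
    (hn : 2 ≤ n) (T : (Fin n → L) → A) :
    TotalOrderizationInvariant T ↔
      (IsSymmetricMap T ∧ ∀ x : Fin n → L,
        T x = T (Function.update
          (Function.update x ⟨0, by linarith⟩ (x ⟨0, by linarith⟩ ⊓ x ⟨1, by linarith⟩))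
          ⟨1, by linarith⟩ (x ⟨0, by linarith⟩ ⊔ x ⟨1, by linarith⟩))) := by
  constructor
  · intro hTOI
    have h1 : ∀ x : Fin n → L, T x = T (medvec x) := hTOI
    constructor
    · intro σ x
      rw [h1 (x ∘ σ), h1 x, medvec_perm σ x]
    · intro x
      have h01 : (⟨0, by linarith⟩ : Fin n) ≠ ⟨1, by linarith⟩ := by
        intro hc
        have := congrArg Fin.val hc
        simp at this
      have heq : (Function.update
          (Function.update x ⟨0, by linarith⟩ (x ⟨0, by linarith⟩ ⊓ x ⟨1, by linarith⟩))
          ⟨1, by linarith⟩ (x ⟨0, by linarith⟩ ⊔ x ⟨1, by linarith⟩))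
          = cmp (⟨0, by linarith⟩ : Fin n) ⟨1, by linarith⟩ x := rfl
      rw [heq, h1 x, h1 (cmp _ _ x), medvec_cmp h01]
  · rintro ⟨hsymm, hmj⟩
    intro x
    show T x = T (medvec x)
    obtain ⟨y, hr, hm⟩ := sort x
    have hT : ∀ (i j : Fin n), i ≠ j → ∀ w, T (cmp i j w) = T w :=
      fun i j hij w => T_cmp hn hsymm hmj hij w
    have e1 : T x = T y := hr.T_eq hT
    have e2 : medvec x = medvec y := hr.medvec_eq
    rw [e1, e2, medvec_monotone hm]

end TOIProof


/-- A map on n ≥ 2 variables is total orderization invariant iff it is symmetric and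
invariant under replacing the first two arguments by their meet and join. -/
theorem toi_iff_symm_and_meetJoin {L A : Type*} [DistribLattice L] [Nonempty A]
    {n : ℕ} (hn : 2 ≤ n) (T : (Fin n → L) → A) :
    TotalOrderizationInvariant T ↔
      (IsSymmetricMap T ∧ ∀ x : Fin n → L,
        T x = T (Function.update
          (Function.update x ⟨0, by omega⟩ (x ⟨0, by omega⟩ ⊓ x ⟨1, by omega⟩))
          ⟨1, by omega⟩ (x ⟨0, by omega⟩ ⊔ x ⟨1, by omega⟩))) := by
  exact TOIProof.toi_iff_symm_and_meetJoin' hn T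
end

section
/- Let L be a distributive lattice, A a nonempty set, n ≥ 2, and T : L^n → A a map. Then T is total orderization invariant if and only if T(x_1,...,x_i,...,x_j,...,x_n) = T(x_1,...,x_i ∧ x_j,...,x_i ∨ x_j,...,x_n) for all x_1,...,x_n ∈ L and all i < j in {1,...,n}. -/
def cmpAt {L : Type*} [Lattice L] {n : ℕ} (x : Fin n → L) (i j : Fin n) : Fin n → L :=
  Function.update (Function.update x i (x i ⊓ x j)) j (x i ⊔ x j)

lemma cmpAt_apply_i {L : Type*} [Lattice L] {n : ℕ} (x : Fin n → L) {i j : Fin n} (h : i ≠ j) :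
    cmpAt x i j i = x i ⊓ x j := by
  simp [cmpAt, Function.update_of_ne h]

lemma cmpAt_apply_j {L : Type*} [Lattice L] {n : ℕ} (x : Fin n → L) (i j : Fin n) :
    cmpAt x i j j = x i ⊔ x j := by
  simp [cmpAt]

lemma cmpAt_apply_other {L : Type*} [Lattice L] {n : ℕ} (x : Fin n → L) {i j t : Fin n}
    (hti : t ≠ i) (htj : t ≠ j) : cmpAt x i j t = x t := by
  simp [cmpAt, Function.update_of_ne htj, Function.update_of_ne hti]

lemma inf_eq_erase {α β : Type*} [DecidableEq β] [SemilatticeInf α] [OrderTop α]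
    {S : Finset β} {i : β} (hi : i ∈ S) (f : β → α) :
    S.inf f = f i ⊓ (S.erase i).inf f := by
  rw [← Finset.inf_insert, Finset.insert_erase hi]

lemma F_comparator {α : Type*} [DistribLattice α] [BoundedOrder α] {n m : ℕ}
    (x : Fin n → α) (i j : Fin n) (hij : i ≠ j) :
    (Finset.univ.powersetCard m).sup (fun S => S.inf (cmpAt x i j)) =
    (Finset.univ.powersetCard m).sup (fun S => S.inf x) := by
  have hxi := cmpAt_apply_i x hij
  have hxj := cmpAt_apply_j x i j
  have hinfR : ∀ R : Finset (Fin n), i ∉ R → j ∉ R → R.inf (cmpAt x i j) = R.inf x := by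
    intro R hi hj
    exact Finset.inf_congr rfl fun t ht =>
      cmpAt_apply_other x (fun h => hi (h ▸ ht)) (fun h => hj (h ▸ ht))
  have hboth : ∀ S : Finset (Fin n), i ∈ S → j ∈ S → S.inf (cmpAt x i j) = S.inf x := by
    intro S hi hj
    have hjs : j ∈ S.erase i := Finset.mem_erase.mpr ⟨Ne.symm hij, hj⟩
    have hR := hinfR ((S.erase i).erase j)
      (fun h => (Finset.mem_erase.mp (Finset.mem_of_mem_erase h)).1 rfl)
      (fun h => (Finset.mem_erase.mp h).1 rfl)
    rw [inf_eq_erase hi, inf_eq_erase hjs, inf_eq_erase hi (f := x), inf_eq_erase hjs (f := x),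
      hR, hxi, hxj, ← inf_assoc, ← inf_assoc,
      inf_of_le_left (le_trans inf_le_left (le_sup_left : x i ≤ x i ⊔ x j))]
  apply le_antisymm <;> refine Finset.sup_le fun S hS => ?_ <;>
    obtain ⟨-, hcard⟩ := Finset.mem_powersetCard.mp hS
  · -- new ≤ old sup
    by_cases hi : i ∈ S <;> by_cases hj : j ∈ S
    · rw [hboth S hi hj]; exact Finset.le_sup (f := fun S => S.inf x) hS
    · have hR := hinfR (S.erase i) (fun h => (Finset.mem_erase.mp h).1 rfl)
        (fun h => hj (Finset.mem_of_mem_erase h))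
      calc S.inf (cmpAt x i j) = (x i ⊓ x j) ⊓ (S.erase i).inf x := by
            rw [inf_eq_erase hi, hR, hxi]
        _ ≤ x i ⊓ (S.erase i).inf x := by gcongr; exact inf_le_left
        _ = S.inf x := (inf_eq_erase hi x).symm
        _ ≤ _ := Finset.le_sup (f := fun S => S.inf x) hS
    · have hR := hinfR (S.erase j) (fun h => hi (Finset.mem_of_mem_erase h))
        (fun h => (Finset.mem_erase.mp h).1 rfl)
      have hiR : i ∉ S.erase j := fun h => hi (Finset.mem_of_mem_erase h)
      have hT : insert i (S.erase j) ∈ Finset.univ.powersetCard m := by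
        refine Finset.mem_powersetCard.mpr ⟨Finset.subset_univ _, ?_⟩
        rw [Finset.card_insert_of_notMem hiR, Finset.card_erase_of_mem hj, hcard]
        have : 0 < m := hcard ▸ Finset.card_pos.mpr ⟨j, hj⟩
        omega
      calc S.inf (cmpAt x i j) = (x i ⊔ x j) ⊓ (S.erase j).inf x := by
            rw [inf_eq_erase hj, hR, hxj]
        _ = (x i ⊓ (S.erase j).inf x) ⊔ (x j ⊓ (S.erase j).inf x) := inf_sup_right _ _ _
        _ ≤ _ := by
            apply sup_le
            · calc x i ⊓ (S.erase j).inf x = (insert i (S.erase j)).inf x :=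
                    (Finset.inf_insert).symm
                _ ≤ _ := Finset.le_sup (f := fun S => S.inf x) hT
            · calc x j ⊓ (S.erase j).inf x = S.inf x := (inf_eq_erase hj x).symm
                _ ≤ _ := Finset.le_sup (f := fun S => S.inf x) hS
    · rw [hinfR S hi hj]; exact Finset.le_sup (f := fun S => S.inf x) hS
  · -- old ≤ new sup
    by_cases hi : i ∈ S <;> by_cases hj : j ∈ S
    · rw [← hboth S hi hj]; exact Finset.le_sup (f := fun S => S.inf (cmpAt x i j)) hS
    · have hR := hinfR (S.erase i) (fun h => (Finset.mem_erase.mp h).1 rfl)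
        (fun h => hj (Finset.mem_of_mem_erase h))
      have hjR : j ∉ S.erase i := fun h => hj (Finset.mem_of_mem_erase h)
      have hT : insert j (S.erase i) ∈ Finset.univ.powersetCard m := by
        refine Finset.mem_powersetCard.mpr ⟨Finset.subset_univ _, ?_⟩
        rw [Finset.card_insert_of_notMem hjR, Finset.card_erase_of_mem hi, hcard]
        have : 0 < m := hcard ▸ Finset.card_pos.mpr ⟨i, hi⟩
        omega
      calc S.inf x = x i ⊓ (S.erase i).inf x := inf_eq_erase hi x
        _ ≤ (x i ⊔ x j) ⊓ (S.erase i).inf x := by gcongr; exact le_sup_left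
        _ = (insert j (S.erase i)).inf (cmpAt x i j) := by
            rw [Finset.inf_insert, hR, hxj]
        _ ≤ _ := Finset.le_sup (f := fun S => S.inf (cmpAt x i j)) hT
    · have hR := hinfR (S.erase j) (fun h => hi (Finset.mem_of_mem_erase h))
        (fun h => (Finset.mem_erase.mp h).1 rfl)
      calc S.inf x = x j ⊓ (S.erase j).inf x := inf_eq_erase hj x
        _ ≤ (x i ⊔ x j) ⊓ (S.erase j).inf x := by gcongr; exact le_sup_right
        _ = S.inf (cmpAt x i j) := by rw [inf_eq_erase hj, hR, hxj]
        _ ≤ _ := Finset.le_sup (f := fun S => S.inf (cmpAt x i j)) hS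
    · rw [← hinfR S hi hj]; exact Finset.le_sup (f := fun S => S.inf (cmpAt x i j)) hS


section
variable {L : Type*} [DistribLattice L] {n : ℕ}

/-- embedding into a bounded distributive lattice -/
def emb (a : L) : WithBot (WithTop L) := ((a : WithTop L) : WithBot (WithTop L))

lemma emb_inf (a b : L) : emb (a ⊓ b) = emb a ⊓ emb b := by
  simp only [emb, WithTop.coe_inf, WithBot.coe_inf]
lemma emb_sup (a b : L) : emb (a ⊔ b) = emb a ⊔ emb b := by
  simp only [emb, WithTop.coe_sup, WithBot.coe_sup]
lemma emb_injective : Function.Injective (emb (L := L)) :=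
  fun a b h => by
    simp only [emb] at h
    exact WithTop.coe_injective (WithBot.coe_injective h)

lemma emb_sup' {ι : Type*} (s : Finset ι) (h : s.Nonempty) (f : ι → L) :
    emb (s.sup' h f) = s.sup (fun t => emb (f t)) := by
  induction h using Finset.Nonempty.cons_induction with
  | singleton a => simp
  | cons a s ha hs ih => rw [Finset.sup'_cons (H := hs), Finset.sup_cons, emb_sup, ih]

lemma emb_inf' {ι : Type*} (s : Finset ι) (h : s.Nonempty) (f : ι → L) :
    emb (s.inf' h f) = s.inf (fun t => emb (f t)) := by
  induction h using Finset.Nonempty.cons_induction with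
  | singleton a => simp
  | cons a s ha hs ih => rw [Finset.inf'_cons (H := hs), Finset.inf_cons, emb_inf, ih]
end

section
variable {L : Type*} [DistribLattice L] {n : ℕ}

lemma emb_median (k : ℕ) (hk1 : 1 ≤ k) (hkn : k ≤ n) (x : Fin n → L) :
    emb (median k hk1 hkn x) =
      (Finset.univ.powersetCard (n + 1 - k)).sup (fun S => S.inf (fun t => emb (x t))) := by
  rw [median, emb_sup']
  calc ((Finset.univ.powersetCard (n + 1 - k)).attach).sup
        (fun s => emb (s.1.inf' (Finset.card_pos.mp (by
          have h := (Finset.mem_powersetCard.mp s.2).2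
          omega)) x))
      = ((Finset.univ.powersetCard (n + 1 - k)).attach).sup
        (fun s => s.1.inf (fun t => emb (x t))) :=
        Finset.sup_congr rfl fun s _ => emb_inf' _ _ _
    _ = _ := Finset.sup_attach _ _

lemma emb_comp_cmpAt (x : Fin n → L) (i j : Fin n) (hij : i ≠ j) :
    (fun t => emb (cmpAt x i j t)) = cmpAt (fun t => emb (x t)) i j := by
  funext t
  by_cases htj : t = j
  · subst htj; rw [cmpAt_apply_j, cmpAt_apply_j, emb_sup]
  · by_cases hti : t = i
    · subst hti; rw [cmpAt_apply_i _ hij, cmpAt_apply_i _ hij, emb_inf]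
    · rw [cmpAt_apply_other _ hti htj, cmpAt_apply_other _ hti htj]

lemma median_cmpAt (k : ℕ) (hk1 : 1 ≤ k) (hkn : k ≤ n) (x : Fin n → L)
    (i j : Fin n) (hij : i ≠ j) :
    median k hk1 hkn (cmpAt x i j) = median k hk1 hkn x := by
  apply emb_injective
  rw [emb_median, emb_median, emb_comp_cmpAt x i j hij, F_comparator _ _ _ hij]

lemma median_of_monotone (k : Fin n) (y : Fin n → L) (hy : Monotone y) :
    median (k.1 + 1) (Nat.succ_le_succ (Nat.zero_le _)) k.2 y = y k := by
  apply le_antisymm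
  · apply Finset.sup'_le
    rintro ⟨S, hS⟩ -
    obtain ⟨-, hcard⟩ := Finset.mem_powersetCard.mp hS
    have hne : S.Nonempty := Finset.card_pos.mp (by omega)
    -- find t ∈ S with t ≤ k
    have hex : ∃ t ∈ S, t ≤ k := by
      by_contra hcon
      push_neg at hcon
      have hsub : S ⊆ Finset.Ioi k := fun t ht => Finset.mem_Ioi.mpr (hcon t ht)
      have := Finset.card_le_card hsub
      rw [Fin.card_Ioi, hcard] at this
      omega
    obtain ⟨t, htS, htk⟩ := hex
    exact le_trans (Finset.inf'_le _ htS) (hy htk)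
  · have hS0 : (Finset.Ici k) ∈ Finset.univ.powersetCard (n + 1 - (k.1 + 1)) := by
      refine Finset.mem_powersetCard.mpr ⟨Finset.subset_univ _, ?_⟩
      rw [Fin.card_Ici]
      omega
    refine le_trans ?_ (Finset.le_sup' _ (Finset.mem_attach _ ⟨_, hS0⟩))
    exact Finset.le_inf' _ _ fun t ht => hy (Finset.mem_Ici.mp ht)
end

section
variable {L : Type*} [DistribLattice L]

def SortStep {n : ℕ} (x y : Fin n → L) : Prop :=
  ∃ i j : Fin n, i < j ∧ y = cmpAt x i j

def Reach {n : ℕ} : (Fin n → L) → (Fin n → L) → Prop :=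
  Relation.ReflTransGen SortStep

lemma SortStep.bound {n : ℕ} {x y : Fin n → L} (h : SortStep x y) {c : L}
    (hx : ∀ t, x t ≤ c) : ∀ t, y t ≤ c := by
  obtain ⟨i, j, hij, rfl⟩ := h
  intro t
  by_cases htj : t = j
  · rw [htj, cmpAt_apply_j]; exact sup_le (hx i) (hx j)
  · by_cases hti : t = i
    · rw [hti, cmpAt_apply_i _ hij.ne]; exact le_trans inf_le_left (hx i)
    · rw [cmpAt_apply_other _ hti htj]; exact hx t

lemma Reach.bound {n : ℕ} {x y : Fin n → L} (h : Reach x y) {c : L}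
    (hx : ∀ t, x t ≤ c) : ∀ t, y t ≤ c := by
  induction h with
  | refl => exact hx
  | tail _ hstep ih => exact hstep.bound ih

lemma pass_aux {n : ℕ} (x : Fin (n + 1) → L) (m : ℕ) (hm : m ≤ n) :
    ∃ y : Fin (n + 1) → L, Reach x y ∧
      y ⟨m, Nat.lt_succ_of_le hm⟩ =
        (Finset.Iic (⟨m, Nat.lt_succ_of_le hm⟩ : Fin (n + 1))).sup'
          ⟨_, Finset.mem_Iic.mpr le_rfl⟩ x ∧
      ∀ t : Fin (n + 1), m < t.1 → y t = x t := by
  induction m with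
  | zero =>
    refine ⟨x, Relation.ReflTransGen.refl, ?_, fun t _ => rfl⟩
    apply le_antisymm
    · exact Finset.le_sup' x (Finset.mem_Iic.mpr le_rfl)
    · refine Finset.sup'_le _ _ fun t ht => ?_
      have : t = ⟨0, Nat.lt_succ_of_le hm⟩ := by
        have := Finset.mem_Iic.mp ht
        rw [Fin.le_def] at this
        exact Fin.ext (Nat.le_zero.mp this)
      rw [this]
  | succ m ih =>
    obtain ⟨y, hreach, hval, hrest⟩ := ih (Nat.le_of_succ_le hm)
    set i : Fin (n + 1) := ⟨m, by omega⟩ with hi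
    set j : Fin (n + 1) := ⟨m + 1, by omega⟩ with hj
    have hij : i < j := by rw [Fin.lt_def]; exact Nat.lt_succ_self m
    refine ⟨cmpAt y i j, Relation.ReflTransGen.tail hreach ⟨i, j, hij, rfl⟩, ?_, ?_⟩
    · rw [cmpAt_apply_j, hval, hrest j (Nat.lt_succ_self m)]
      apply le_antisymm
      · apply sup_le
        · refine Finset.sup'_le _ _ fun t ht => Finset.le_sup' x ?_
          exact Finset.mem_Iic.mpr (le_trans (Finset.mem_Iic.mp ht) hij.le)
        · exact Finset.le_sup' x (Finset.mem_Iic.mpr le_rfl)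
      · refine Finset.sup'_le _ _ fun t ht => ?_
        have htj := Finset.mem_Iic.mp ht
        rcases Nat.lt_or_ge t.1 (m + 1) with h' | h'
        · exact le_trans (Finset.le_sup' x (Finset.mem_Iic.mpr
            (by rw [Fin.le_def]; exact Nat.lt_succ_iff.mp h'))) le_sup_left
        · have : t = j := Fin.ext (le_antisymm htj h')
          rw [this]; exact le_sup_right
    · intro t ht
      rw [cmpAt_apply_other _ (fun h => by simp [h, hi] at ht)
        (fun h => by simp [h, hj] at ht), hrest t (by omega)]

lemma pass {n : ℕ} (x : Fin (n + 1) → L) :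
    ∃ y : Fin (n + 1) → L, Reach x y ∧ ∀ t, y t ≤ y (Fin.last n) := by
  obtain ⟨y, hreach, hval, -⟩ := pass_aux x n le_rfl
  refine ⟨y, hreach, fun t => ?_⟩
  have hbd : ∀ t, y t ≤ (Finset.Iic (⟨n, Nat.lt_succ_of_le le_rfl⟩ : Fin (n+1))).sup'
      ⟨_, Finset.mem_Iic.mpr le_rfl⟩ x :=
    hreach.bound fun t => Finset.le_sup' x (Finset.mem_Iic.mpr (Fin.le_last t))
  exact le_trans (hbd t) (le_of_eq hval.symm)

lemma SortStep.snoc {n : ℕ} {u v : Fin n → L} (h : SortStep u v) (c : L) :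
    SortStep (Fin.snoc u c) (Fin.snoc v c) := by
  obtain ⟨i, j, hij, rfl⟩ := h
  refine ⟨i.castSucc, j.castSucc, by simpa using hij, ?_⟩
  funext t
  refine Fin.lastCases ?_ (fun s => ?_) t
  · rw [cmpAt_apply_other _ (Fin.castSucc_lt_last i).ne' (Fin.castSucc_lt_last j).ne',
      Fin.snoc_last, Fin.snoc_last]
  · rw [Fin.snoc_castSucc]
    by_cases hsj : s = j
    · rw [hsj, cmpAt_apply_j, cmpAt_apply_j, Fin.snoc_castSucc, Fin.snoc_castSucc]
    · by_cases hsi : s = i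
      · rw [hsi, cmpAt_apply_i _ hij.ne,
          cmpAt_apply_i _ (by simpa using hij.ne : i.castSucc ≠ j.castSucc),
          Fin.snoc_castSucc, Fin.snoc_castSucc]
      · rw [cmpAt_apply_other _ hsi hsj,
          cmpAt_apply_other _ (by simpa using hsi : s.castSucc ≠ i.castSucc)
            (by simpa using hsj : s.castSucc ≠ j.castSucc), Fin.snoc_castSucc]

lemma Reach.snoc {n : ℕ} {u v : Fin n → L} (h : Reach u v) (c : L) :
    Reach (Fin.snoc u c) (Fin.snoc v c) := by
  induction h with
  | refl => exact Relation.ReflTransGen.refl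
  | tail _ hstep ih => exact Relation.ReflTransGen.tail ih (hstep.snoc c)

lemma Reach.median_eq {n : ℕ} {u v : Fin n → L} (h : Reach u v)
    (k : ℕ) (h1 : 1 ≤ k) (h2 : k ≤ n) :
    median k h1 h2 u = median k h1 h2 v := by
  induction h with
  | refl => rfl
  | tail _ hs ih =>
    obtain ⟨i, j, hij, rfl⟩ := hs
    rw [ih]
    exact (median_cmpAt _ _ _ _ i j hij.ne).symm

lemma sort_exists : ∀ {n : ℕ} (x : Fin n → L), ∃ y, Reach x y ∧ Monotone y := by
  intro n
  induction n with
  | zero => exact fun x => ⟨x, Relation.ReflTransGen.refl, fun a => a.elim0⟩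
  | succ n ih =>
    intro x
    obtain ⟨y, hxy, hbd⟩ := pass x
    obtain ⟨z, hz, hzmono⟩ := ih (y ∘ Fin.castSucc)
    set c := y (Fin.last n) with hc
    have hyz : Reach y (Fin.snoc z c) := by
      have h2 := hz.snoc c
      have h3 : (Fin.snoc (y ∘ Fin.castSucc) c : Fin (n+1) → L) = y := by
        funext t
        refine Fin.lastCases ?_ (fun s => ?_) t
        · rw [Fin.snoc_last]
        · rw [Fin.snoc_castSucc]; rfl
      rwa [h3] at h2
    have hzc : ∀ t, z t ≤ c := hz.bound fun t => hbd (Fin.castSucc t)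
    refine ⟨Fin.snoc z c, hxy.trans hyz, fun a b hab => ?_⟩
    obtain ⟨sb, rfl⟩ | rfl := b.eq_castSucc_or_eq_last
    · obtain ⟨sa, rfl⟩ | rfl := a.eq_castSucc_or_eq_last
      · rw [Fin.snoc_castSucc, Fin.snoc_castSucc]
        exact hzmono (by simpa using hab)
      · exact absurd hab (not_le.mpr (Fin.castSucc_lt_last sb))
    · obtain ⟨sa, rfl⟩ | rfl := a.eq_castSucc_or_eq_last
      · rw [Fin.snoc_castSucc, Fin.snoc_last]; exact hzc sa
      · exact le_rfl
end


/-- A map on n ≥ 2 variables is total orderization invariant iff it is invariant under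
replacing any two arguments x_i, x_j (i < j) by x_i ⊓ x_j and x_i ⊔ x_j. -/
theorem toi_iff_pairwise_meetJoin {L A : Type*} [DistribLattice L] [Nonempty A]
    {n : ℕ} (hn : 2 ≤ n) (T : (Fin n → L) → A) :
    TotalOrderizationInvariant T ↔
      ∀ (x : Fin n → L) (i j : Fin n), i < j →
        T x = T (Function.update (Function.update x i (x i ⊓ x j)) j (x i ⊔ x j)) := by
  constructor
  · intro hT x i j hij
    show T x = T (cmpAt x i j)
    rw [hT x, hT (cmpAt x i j)]
    congr 1
    funext k
    exact (median_cmpAt _ _ _ x i j hij.ne).symm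
  · intro hP x
    have hstep : ∀ u v : Fin n → L, SortStep u v → T u = T v := by
      rintro u v ⟨i, j, hij, rfl⟩
      exact hP u i j hij
    have hreach : ∀ u v : Fin n → L, Reach u v → T u = T v := by
      intro u v h
      induction h with
      | refl => rfl
      | tail _ hs ih => exact ih.trans (hstep _ _ hs)
    obtain ⟨y, hxy, hmono⟩ := sort_exists x
    have hmed := fun (k : ℕ) (h1 : 1 ≤ k) (h2 : k ≤ n) => Reach.median_eq hxy k h1 h2
    have hfun : (fun k : Fin n =>
        median (k.1 + 1) (Nat.succ_le_succ (Nat.zero_le _)) k.2 x) = y := by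
      funext k
      rw [hmed, median_of_monotone k y hmono]
    rw [hfun]
    exact hreach x y hxy
end

section
/- Let L be a distributive lattice, A a nonempty set, n ≥ 2, and T : L^n → A a map. Then T is total orderization invariant if and only if for every m ∈ {2,...,n} and all x_1,...,x_n ∈ L, T(x_1,...,x_n) = T(M_1(x_1,...,x_m),...,M_m(x_1,...,x_m), x_{m+1},...,x_n), where the medians are computed with respect to the first m arguments. -/
/-! ### Auxiliary lemmas -/

open Finset Order
open scoped Classical

section PropLemmas

lemma prop_sup' {α : Type*} {s : Finset α} (h : s.Nonempty) (f : α → Prop) :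
    s.sup' h f ↔ ∃ a ∈ s, f a := by
  constructor
  · exact (Finset.sup'_le_iff h f).mpr fun b hb fb => ⟨b, hb, fb⟩
  · rintro ⟨a, ha, fa⟩
    exact Finset.le_sup' f ha fa

lemma prop_inf' {α : Type*} {s : Finset α} (h : s.Nonempty) (f : α → Prop) :
    s.inf' h f ↔ ∀ a ∈ s, f a := by
  constructor
  · exact fun H a ha => Finset.inf'_le f ha H
  · exact fun H => (Finset.le_inf'_iff h f).mpr (fun b hb => fun (H' : ∀ a ∈ s, f a) => H' b hb) H

lemma median_prop_iff {n : ℕ} (k : ℕ) (hk1 : 1 ≤ k) (hkn : k ≤ n) (y : Fin n → Prop) :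
    median k hk1 hkn y ↔ ∃ S : Finset (Fin n), S.card = n + 1 - k ∧ ∀ i ∈ S, y i := by
  unfold median
  rw [prop_sup']
  constructor
  · rintro ⟨⟨S, hS⟩, -, hinf⟩
    exact ⟨S, Finset.mem_powersetCard_univ.mp hS, fun i hi => (prop_inf' _ _).mp hinf i hi⟩
  · rintro ⟨S, hS, hy⟩
    exact ⟨⟨S, Finset.mem_powersetCard_univ.mpr hS⟩, Finset.mem_attach _ _,
      (prop_inf' _ _).mpr hy⟩

noncomputable def cnt {p : ℕ} (y : Fin p → Prop) : ℕ :=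
  (Finset.univ.filter (fun i => y i)).card

lemma cnt_le {p : ℕ} (y : Fin p → Prop) : cnt y ≤ p :=
  (Finset.card_filter_le _ _).trans (by simp)

lemma median_iff_card {p : ℕ} (k : ℕ) (hk1 : 1 ≤ k) (hkp : k ≤ p) (y : Fin p → Prop) :
    median k hk1 hkp y ↔ p + 1 - k ≤ cnt y := by
  rw [median_prop_iff]
  constructor
  · rintro ⟨S, hS, hy⟩
    calc p + 1 - k = S.card := hS.symm
    _ ≤ cnt y := Finset.card_le_card fun i hi =>
      Finset.mem_filter.mpr ⟨Finset.mem_univ _, hy i hi⟩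
  · intro h
    obtain ⟨t, ht, hcard⟩ := Finset.exists_subset_card_eq h
    exact ⟨t, hcard, fun i hi => (Finset.mem_filter.mp (ht hi)).2⟩

lemma card_filter_le_val {m a : ℕ} :
    (Finset.univ.filter (fun j : Fin m => a ≤ j.1)).card = m - a := by
  rw [← Nat.card_Ico a m]
  apply Finset.card_bij (fun (j : Fin m) _ => j.1)
  · intro j hj
    rw [Finset.mem_filter] at hj
    exact Finset.mem_Ico.mpr ⟨hj.2, j.2⟩
  · intro j₁ _ j₂ _ h
    exact Fin.ext h
  · intro i hi
    rw [Finset.mem_Ico] at hi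
    exact ⟨⟨i, hi.2⟩, Finset.mem_filter.mpr ⟨Finset.mem_univ _, hi.1⟩, rfl⟩

lemma cnt_medians {m : ℕ} (y : Fin m → Prop)
    (med : Fin m → Prop)
    (hmed : ∀ j : Fin m, med j ↔ m + 1 - (j.1 + 1) ≤ cnt y) :
    (Finset.univ.filter (fun j : Fin m => med j)).card = cnt y := by
  have hc := cnt_le y
  have h2 : (Finset.univ.filter (fun j : Fin m => med j))
      = (Finset.univ.filter (fun j : Fin m => m - cnt y ≤ j.1)) := by
    apply Finset.filter_congr
    intro j _
    rw [hmed j]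
    have := j.2
    constructor <;> intro <;> omega
  rw [h2, card_filter_le_val]
  omega

lemma cnt_split {n : ℕ} (m : ℕ) (z : Fin n → Prop) :
    cnt z = (Finset.univ.filter fun i : Fin n => z i ∧ i.1 < m).card
      + (Finset.univ.filter fun i : Fin n => z i ∧ ¬ i.1 < m).card := by
  have h := Finset.card_filter_add_card_filter_not
    (s := Finset.univ.filter fun i : Fin n => z i) (p := fun i => i.1 < m)
  rw [Finset.filter_filter, Finset.filter_filter] at h
  exact h.symm

lemma card_prefix {n m : ℕ} (hm : m ≤ n) (P : Fin n → Prop) :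
    (Finset.univ.filter fun i : Fin n => P i ∧ i.1 < m).card
      = (Finset.univ.filter fun j : Fin m => P (Fin.castLE hm j)).card := by
  apply Finset.card_bij (fun (i : Fin n) hi => (⟨i.1, (Finset.mem_filter.mp hi).2.2⟩ : Fin m))
  · intro a ha
    have h := (Finset.mem_filter.mp ha).2
    refine Finset.mem_filter.mpr ⟨Finset.mem_univ _, ?_⟩
    have : Fin.castLE hm (⟨a.1, h.2⟩ : Fin m) = a := Fin.ext rfl
    rw [this]
    exact h.1
  · intro a₁ _ a₂ _ h
    simpa [Fin.ext_iff] using h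
  · intro j hj
    refine ⟨Fin.castLE hm j, Finset.mem_filter.mpr
      ⟨Finset.mem_univ _, (Finset.mem_filter.mp hj).2, j.2⟩, Fin.ext rfl⟩

lemma cnt_partial' {n m : ℕ} (hm : m ≤ n) (y z : Fin n → Prop)
    (hzlt : ∀ i : Fin n, (h : i.1 < m) →
      z i = median (i.1 + 1) (Nat.succ_le_succ (Nat.zero_le _)) h
        (fun j : Fin m => y (Fin.castLE hm j)))
    (hzge : ∀ i : Fin n, ¬ i.1 < m → z i = y i) :
    cnt z = cnt y := by
  rw [cnt_split m z, cnt_split m y]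
  congr 1
  · rw [card_prefix hm, card_prefix hm]
    have h1 : (Finset.univ.filter fun j : Fin m => z (Fin.castLE hm j)).card
        = cnt (fun j : Fin m => y (Fin.castLE hm j)) := by
      apply cnt_medians (fun j : Fin m => y (Fin.castLE hm j))
        (fun j : Fin m => z (Fin.castLE hm j))
      intro j
      rw [hzlt (Fin.castLE hm j) j.2]
      exact median_iff_card _ _ _ _
    have h2 : (Finset.univ.filter fun j : Fin m => y (Fin.castLE hm j)).card
        = cnt (fun j : Fin m => y (Fin.castLE hm j)) := rfl
    rw [h1, h2]
  · apply congrArg Finset.card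
    apply Finset.filter_congr
    intro i _
    constructor
    · rintro ⟨h1, h2⟩
      exact ⟨(hzge i h2) ▸ h1, h2⟩
    · rintro ⟨h1, h2⟩
      exact ⟨(hzge i h2).symm ▸ h1, h2⟩

lemma cnt_partial {n m : ℕ} (hm : m ≤ n) (y : Fin n → Prop) :
    cnt (fun i : Fin n =>
      if h : i.1 < m then
        median (i.1 + 1) (Nat.succ_le_succ (Nat.zero_le _)) h
          (fun j : Fin m => y (Fin.castLE hm j))
      else y i) = cnt y := by
  exact cnt_partial' hm y _ (fun i h => dif_pos h) (fun i h => dif_neg h)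

end PropLemmas

section Separation

lemma exists_latticeHom_bounded {L : Type*} [DistribLattice L] [BoundedOrder L]
    {a b : L} (h : ¬ a ≤ b) : ∃ f : LatticeHom L Prop, f a ∧ ¬ f b := by
  have hdisj : Disjoint ((PFilter.principal a : PFilter L) : Set L)
      ((Ideal.principal b : Ideal L) : Set L) := by
    rw [Set.disjoint_left]
    intro x hx hx'
    exact h (le_trans (PFilter.mem_principal.mp hx) (Ideal.mem_principal.mp hx'))
  obtain ⟨J, hJp, hIJ, hdisj'⟩ := DistribLattice.prime_ideal_of_disjoint_filter_ideal hdisj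
  refine ⟨⟨⟨fun x => x ∉ J, ?_⟩, ?_⟩, ?_, ?_⟩
  · intro x y
    simp only [sup_Prop_eq]
    have := @Order.Ideal.sup_mem_iff L _ x y J
    exact propext (by tauto)
  · intro x y
    simp only [inf_Prop_eq]
    have h1 : x ⊓ y ∈ J → x ∈ J ∨ y ∈ J := hJp.mem_or_mem
    have h2 : x ∈ J → x ⊓ y ∈ J := fun hx => J.lower inf_le_left hx
    have h3 : y ∈ J → x ⊓ y ∈ J := fun hy => J.lower inf_le_right hy
    exact propext (by tauto)
  · exact Set.disjoint_left.mp hdisj' (PFilter.mem_principal.mpr le_rfl)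
  · exact fun hb => hb (hIJ (Ideal.mem_principal.mpr le_rfl))

noncomputable def embedHom (L : Type*) [DistribLattice L] :
    LatticeHom L (WithBot (WithTop L)) where
  toFun x := ((x : WithTop L) : WithBot (WithTop L))
  map_sup' x y := by rw [WithTop.coe_sup, WithBot.coe_sup]
  map_inf' x y := by rw [WithTop.coe_inf, WithBot.coe_inf]

lemma embedHom_inj {L : Type*} [DistribLattice L] {x y : L} (h : embedHom L x = embedHom L y) :
    x = y := by
  simpa [embedHom] using h

lemma exists_latticeHom {L : Type*} [DistribLattice L] {a b : L} (h : a ≠ b) :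
    ∃ f : LatticeHom L Prop, f a ≠ f b := by
  have hab : ¬ embedHom L a ≤ embedHom L b ∨ ¬ embedHom L b ≤ embedHom L a := by
    by_contra hc
    push_neg at hc
    exact h (embedHom_inj (le_antisymm hc.1 hc.2))
  rcases hab with hab | hab
  · obtain ⟨f, hfa, hfb⟩ := exists_latticeHom_bounded hab
    exact ⟨f.comp (embedHom L), by simp only [LatticeHom.comp_apply]; tauto⟩
  · obtain ⟨f, hfa, hfb⟩ := exists_latticeHom_bounded hab
    exact ⟨f.comp (embedHom L), by simp only [LatticeHom.comp_apply]; tauto⟩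

lemma eq_of_latticeHom {L : Type*} [DistribLattice L] {a b : L}
    (h : ∀ f : LatticeHom L Prop, f a = f b) : a = b := by
  by_contra hne
  obtain ⟨f, hf⟩ := exists_latticeHom hne
  exact hf (h f)

lemma map_median {L M : Type*} [DistribLattice L] [DistribLattice M] (f : LatticeHom L M)
    {n : ℕ} (k : ℕ) (hk1 : 1 ≤ k) (hkn : k ≤ n) (x : Fin n → L) :
    f (median k hk1 hkn x) = median k hk1 hkn (fun i => f (x i)) := by
  unfold median
  rw [map_finset_sup' f]
  apply Finset.sup'_congr _ rfl
  intro s _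
  exact map_finset_inf' f _ x

end Separation

section Crux

lemma median_partial_prop {n m : ℕ} (hm : m ≤ n) (k : ℕ) (hk1 : 1 ≤ k) (hkn : k ≤ n)
    (y : Fin n → Prop) :
    median k hk1 hkn (fun i : Fin n =>
      if h : i.1 < m then
        median (i.1 + 1) (Nat.succ_le_succ (Nat.zero_le _)) h
          (fun j : Fin m => y (Fin.castLE hm j))
      else y i)
    = median k hk1 hkn y := by
  apply propext
  rw [median_iff_card, median_iff_card, cnt_partial hm]

lemma median_partial {L : Type*} [DistribLattice L] {n m : ℕ} (hm : m ≤ n)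
    (x : Fin n → L) (k : ℕ) (hk1 : 1 ≤ k) (hkn : k ≤ n) :
    median k hk1 hkn (fun i : Fin n =>
      if h : i.1 < m then
        median (i.1 + 1) (Nat.succ_le_succ (Nat.zero_le _)) h
          (fun j : Fin m => x (Fin.castLE hm j))
      else x i)
    = median k hk1 hkn x := by
  apply eq_of_latticeHom
  intro f
  rw [map_median, map_median]
  have hcomp : (fun i : Fin n => f ((fun i : Fin n =>
      if h : i.1 < m then
        median (i.1 + 1) (Nat.succ_le_succ (Nat.zero_le _)) h
          (fun j : Fin m => x (Fin.castLE hm j))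
      else x i) i))
      = (fun i : Fin n =>
        if h : i.1 < m then
          median (i.1 + 1) (Nat.succ_le_succ (Nat.zero_le _)) h
            (fun j : Fin m => f (x (Fin.castLE hm j)))
        else f (x i)) := by
    funext i
    by_cases h : i.1 < m
    · simp only [dif_pos h]
      exact map_median f _ _ _ _
    · simp only [dif_neg h]
  rw [hcomp]
  exact median_partial_prop hm k hk1 hkn (fun i => f (x i))

end Crux

/-- A map on n ≥ 2 variables is total orderization invariant iff for every 2 ≤ m ≤ n it
is invariant under total orderization of its first m arguments. -/
theorem toi_iff_partial_toi {L A : Type*} [DistribLattice L] [Nonempty A]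
    {n : ℕ} (hn : 2 ≤ n) (T : (Fin n → L) → A) :
    TotalOrderizationInvariant T ↔
      ∀ (m : ℕ) (_ : 2 ≤ m) (hm : m ≤ n) (x : Fin n → L),
        T x = T (fun k =>
          if h : k.1 < m then
            median (k.1 + 1) (Nat.succ_le_succ (Nat.zero_le _)) h
              (fun i : Fin m => x (Fin.castLE hm i))
          else x k) := by
  constructor
  · intro hT m hm2 hm x
    set y : Fin n → L := fun k =>
      if h : k.1 < m then
        median (k.1 + 1) (Nat.succ_le_succ (Nat.zero_le _)) h
          (fun i : Fin m => x (Fin.castLE hm i))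
      else x k with hy
    have h3 : (fun k : Fin n => median (k.1 + 1) (Nat.succ_le_succ (Nat.zero_le _)) k.2 y)
        = (fun k : Fin n => median (k.1 + 1) (Nat.succ_le_succ (Nat.zero_le _)) k.2 x) := by
      funext k
      exact median_partial hm x (k.1 + 1) (Nat.succ_le_succ (Nat.zero_le _)) k.2
    calc T x = T (fun k : Fin n =>
        median (k.1 + 1) (Nat.succ_le_succ (Nat.zero_le _)) k.2 x) := hT x
    _ = T (fun k : Fin n =>
        median (k.1 + 1) (Nat.succ_le_succ (Nat.zero_le _)) k.2 y) := by rw [h3]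
    _ = T y := (hT y).symm
  · intro H x
    have h := H n hn le_rfl x
    have e : (fun k : Fin n =>
        if h : k.1 < n then
          median (k.1 + 1) (Nat.succ_le_succ (Nat.zero_le _)) h
            (fun i : Fin n => x (Fin.castLE le_rfl i))
        else x k)
        = (fun k : Fin n => median (k.1 + 1) (Nat.succ_le_succ (Nat.zero_le _)) k.2 x) := by
      funext k
      have hx : (fun i : Fin n => x (Fin.castLE le_rfl i)) = x :=
        funext fun i => congrArg x (Fin.ext rfl)
      rw [dif_pos k.2, hx]
    rw [e] at h
    exact h
end

section
/- Let L and M be distributive lattices, n ≥ 2, and T : L^n → M a lattice n-homomorphism. Then T is total orderization invariant if and only if T is symmetric. -/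
/-- `T : Lⁿ → M` is a lattice n-homomorphism: in each coordinate separately it
preserves binary joins and binary meets. -/
def IsLatticeMultiHom {L M : Type*} [DistribLattice L] [DistribLattice M] {n : ℕ}
    (T : (Fin n → L) → M) : Prop :=
  ∀ (x : Fin n → L) (i : Fin n) (y : L),
    T (Function.update x i (x i ⊔ y)) = T x ⊔ T (Function.update x i y) ∧
    T (Function.update x i (x i ⊓ y)) = T x ⊓ T (Function.update x i y)

/-- `P : L → M` is a lattice homomorphism. -/
def IsLatticeHomMap {L M : Type*} [DistribLattice L] [DistribLattice M] (P : L → M) : Prop :=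
  ∀ a b : L, P (a ⊔ b) = P a ⊔ P b ∧ P (a ⊓ b) = P a ⊓ P b

section Aux

variable {L : Type*} [DistribLattice L] {n : ℕ}

lemma mem_psc {S : Finset (Fin n)} {m : ℕ} :
    S ∈ Finset.univ.powersetCard m ↔ S.card = m := by
  simp [Finset.mem_powersetCard]

lemma psc_nonempty {k : ℕ} (hk1 : 1 ≤ k) (hkn : k ≤ n) {S : Finset (Fin n)}
    (hS : S ∈ Finset.univ.powersetCard (n + 1 - k)) : S.Nonempty := by
  rw [← Finset.card_pos, mem_psc.mp hS]; omega

lemma le_median {k : ℕ} (hk1 : 1 ≤ k) (hkn : k ≤ n) (x : Fin n → L)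
    {S : Finset (Fin n)} (hS : S ∈ Finset.univ.powersetCard (n + 1 - k)) (hSne : S.Nonempty) :
    S.inf' hSne x ≤ median k hk1 hkn x := by
  unfold median
  exact Finset.le_sup'
    (fun s : {s // s ∈ Finset.univ.powersetCard (n + 1 - k)} => s.1.inf'
      (Finset.card_pos.mp (by
        have h := (Finset.mem_powersetCard.mp s.2).2
        omega)) x)
    (Finset.mem_attach _ ⟨S, hS⟩)

lemma median_le {k : ℕ} (hk1 : 1 ≤ k) (hkn : k ≤ n) (x : Fin n → L) {c : L}
    (h : ∀ S : Finset (Fin n), ∀ _ : S ∈ Finset.univ.powersetCard (n + 1 - k),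
      ∀ hSne : S.Nonempty, S.inf' hSne x ≤ c) :
    median k hk1 hkn x ≤ c := by
  unfold median
  exact Finset.sup'_le _ _ fun s _ => h s.1 s.2 _

lemma median_perm_le (σ : Equiv.Perm (Fin n)) {k : ℕ} (hk1 : 1 ≤ k) (hkn : k ≤ n)
    (x : Fin n → L) : median k hk1 hkn (x ∘ σ) ≤ median k hk1 hkn x := by
  apply median_le
  intro S hS hSne
  have hcard : (S.image σ).card = n + 1 - k := by
    rw [Finset.card_image_of_injective _ σ.injective, mem_psc.mp hS]
  have h1 : S.inf' hSne (x ∘ σ) ≤ (S.image σ).inf' (hSne.image σ) x := by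
    apply Finset.le_inf'
    intro e he
    obtain ⟨a, ha, rfl⟩ := Finset.mem_image.mp he
    exact Finset.inf'_le _ ha
  exact h1.trans (le_median hk1 hkn x (mem_psc.mpr hcard) _)

lemma median_perm (σ : Equiv.Perm (Fin n)) {k : ℕ} (hk1 : 1 ≤ k) (hkn : k ≤ n)
    (x : Fin n → L) : median k hk1 hkn (x ∘ σ) = median k hk1 hkn x := by
  refine le_antisymm (median_perm_le σ hk1 hkn x) ?_
  have h := median_perm_le σ⁻¹ hk1 hkn (x ∘ σ)
  have he : (x ∘ σ) ∘ (σ⁻¹ : Equiv.Perm (Fin n)) = x := by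
    funext e; simp
  rwa [he] at h

lemma median_monotone {y : Fin n → L} (hy : Monotone y) (k : Fin n)
    (hk1 : 1 ≤ k.1 + 1) (hkn : k.1 + 1 ≤ n) :
    median (k.1 + 1) hk1 hkn y = y k := by
  apply le_antisymm
  · apply median_le
    intro S hS hSne
    have hcard := mem_psc.mp hS
    have hex : ∃ e ∈ S, e ≤ k := by
      by_contra hc
      push_neg at hc
      have hsub : S ⊆ Finset.Ioi k := by
        intro e he
        exact Finset.mem_Ioi.mpr (hc e he)
      have := Finset.card_le_card hsub
      rw [hcard, Fin.card_Ioi] at this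
      omega
    obtain ⟨e, heS, hek⟩ := hex
    exact (Finset.inf'_le _ heS).trans (hy hek)
  · have hmem : Finset.Ici k ∈ Finset.univ.powersetCard (n + 1 - (k.1 + 1)) := by
      rw [mem_psc, Fin.card_Ici]; omega
    have hne : (Finset.Ici k).Nonempty := ⟨k, Finset.mem_Ici.mpr le_rfl⟩
    refine le_trans ?_ (le_median hk1 hkn y hmem hne)
    apply Finset.le_inf'
    intro e he
    exact hy (Finset.mem_Ici.mp he)

end Aux
section Comp

variable {L : Type*} [DistribLattice L] {n : ℕ}

/-- Ascending comparator at positions `i < j`. -/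
def comp (i j : Fin n) (x : Fin n → L) : Fin n → L :=
  Function.update (Function.update x i (x i ⊓ x j)) j (x i ⊔ x j)

lemma comp_apply_i {i j : Fin n} (hij : i ≠ j) (x : Fin n → L) :
    comp i j x i = x i ⊓ x j := by
  rw [comp, Function.update_of_ne hij, Function.update_self]

lemma comp_apply_j {i j : Fin n} (x : Fin n → L) : comp i j x j = x i ⊔ x j := by
  rw [comp, Function.update_self]

lemma comp_apply_other {i j e : Fin n} (hei : e ≠ i) (hej : e ≠ j) (x : Fin n → L) :
    comp i j x e = x e := by
  rw [comp, Function.update_of_ne hej, Function.update_of_ne hei]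

/-- inf' of a function whose value at one point is a join splits as a join. -/
lemma inf'_update_sup {S : Finset (Fin n)} {j : Fin n} (hj : j ∈ S) (x : Fin n → L) (a b : L) :
    S.inf' ⟨j, hj⟩ (Function.update x j (a ⊔ b)) =
      S.inf' ⟨j, hj⟩ (Function.update x j a) ⊔ S.inf' ⟨j, hj⟩ (Function.update x j b) := by
  rcases (S.erase j).eq_empty_or_nonempty with hE | hE
  · have hS : S = {j} := by
      apply Finset.eq_singleton_iff_unique_mem.mpr
      refine ⟨hj, fun e he => ?_⟩
      by_contra hne
      exact (Finset.notMem_empty e) (hE ▸ Finset.mem_erase.mpr ⟨hne, he⟩)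
    subst hS
    simp
  · have hjE : j ∉ S.erase j := Finset.notMem_erase j S
    have hS : S = insert j (S.erase j) := (Finset.insert_erase hj).symm
    have key : ∀ c : L, S.inf' ⟨j, hj⟩ (Function.update x j c) =
        c ⊓ (S.erase j).inf' hE x := by
      intro c
      rw [Finset.inf'_congr (H := ⟨j, hj⟩) hS (fun a _ => rfl),
        Finset.inf'_insert (H := hE), Function.update_self]
      congr 1
      exact Finset.inf'_congr hE rfl fun e he =>
        Function.update_of_ne (Finset.mem_erase.mp he).1 _ _
    rw [key, key, key, inf_sup_right]

lemma median_comp {k : ℕ} (hk1 : 1 ≤ k) (hkn : k ≤ n) {i j : Fin n} (hij : i ≠ j)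
    (x : Fin n → L) : median k hk1 hkn (comp i j x) = median k hk1 hkn x := by
  set y := comp i j x with hy
  have hyi : y i = x i ⊓ x j := comp_apply_i hij x
  have hyj : y j = x i ⊔ x j := comp_apply_j x
  have hyo : ∀ e : Fin n, e ≠ i → e ≠ j → y e = x e := fun e h1 h2 => comp_apply_other h1 h2 x
  -- in the "both in S" case the infs agree
  have hboth : ∀ (S : Finset (Fin n)) (hSne : S.Nonempty), i ∈ S → j ∈ S →
      S.inf' hSne y = S.inf' hSne x := by
    intro S hSne hiS hjS
    apply le_antisymm
    · apply Finset.le_inf'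
      intro e he
      rcases eq_or_ne e i with rfl | hei
      · exact (Finset.inf'_le _ hiS).trans (by rw [hyi]; exact inf_le_left)
      rcases eq_or_ne e j with rfl | hej
      · exact (Finset.inf'_le _ hiS).trans (by rw [hyi]; exact inf_le_right)
      · exact (Finset.inf'_le _ he).trans_eq (hyo e hei hej)
    · apply Finset.le_inf'
      intro e he
      rcases eq_or_ne e i with rfl | hei
      · rw [hyi]
        exact le_inf (Finset.inf'_le _ hiS) (Finset.inf'_le _ hjS)
      rcases eq_or_ne e j with rfl | hej
      · rw [hyj]
        exact (Finset.inf'_le _ hiS).trans le_sup_left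
      · exact (Finset.inf'_le _ he).trans_eq (hyo e hei hej).symm
  apply le_antisymm
  · apply median_le
    intro S hS hSne
    by_cases hiS : i ∈ S <;> by_cases hjS : j ∈ S
    · rw [hboth S hSne hiS hjS]
      exact le_median hk1 hkn x hS hSne
    · -- i ∈ S, j ∉ S : inf' y ≤ inf' x
      refine le_trans ?_ (le_median hk1 hkn x hS hSne)
      apply Finset.le_inf'
      intro e he
      rcases eq_or_ne e i with rfl | hei
      · exact (Finset.inf'_le _ hiS).trans (by rw [hyi]; exact inf_le_left)
      · have hej : e ≠ j := fun h => hjS (h ▸ he)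
        exact (Finset.inf'_le _ he).trans_eq (hyo e hei hej)
    · -- j ∈ S, i ∉ S : distributive case
      have hiS' : i ∉ S.erase j := fun h => hiS (Finset.mem_of_mem_erase h)
      set S' : Finset (Fin n) := insert i (S.erase j) with hS'
      have hS'card : S' ∈ Finset.univ.powersetCard (n + 1 - k) := by
        rw [mem_psc, Finset.card_insert_of_notMem hiS',
          Finset.card_erase_of_mem hjS]
        have h1 := mem_psc.mp hS
        have h2 : 1 ≤ S.card := Finset.card_pos.mpr hSne
        omega
      have hS'ne : S'.Nonempty := ⟨i, Finset.mem_insert_self _ _⟩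
      -- y restricted to S equals update x' j (a ⊔ b) with x' := update x i (x i ⊓ x j)
      have hysplit : S.inf' hSne y =
          S.inf' hSne (Function.update (Function.update x i (x i ⊓ x j)) j (x i)) ⊔
          S.inf' hSne (Function.update (Function.update x i (x i ⊓ x j)) j (x j)) :=
        inf'_update_sup hjS _ (x i) (x j)
      have h1 : S.inf' hSne (Function.update (Function.update x i (x i ⊓ x j)) j (x i)) =
          S'.inf' hS'ne x := by
        apply le_antisymm
        · apply Finset.le_inf'
          intro e he
          rcases Finset.mem_insert.mp he with rfl | he'
          · exact (Finset.inf'_le _ hjS).trans_eq (by rw [Function.update_self])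
          · obtain ⟨hej, heS⟩ := Finset.mem_erase.mp he'
            have hei : e ≠ i := fun h => hiS (h ▸ heS)
            exact (Finset.inf'_le _ heS).trans_eq
              (by rw [Function.update_of_ne hej, Function.update_of_ne hei])
        · apply Finset.le_inf'
          intro e he
          rcases eq_or_ne e j with rfl | hej
          · rw [Function.update_self]
            exact Finset.inf'_le _ (Finset.mem_insert_self _ _)
          · have hei : e ≠ i := fun h => hiS (h ▸ he)
            rw [Function.update_of_ne hej, Function.update_of_ne hei]
            exact Finset.inf'_le _ (Finset.mem_insert_of_mem (Finset.mem_erase.mpr ⟨hej, he⟩))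
      have h2 : S.inf' hSne (Function.update (Function.update x i (x i ⊓ x j)) j (x j)) =
          S.inf' hSne x := by
        apply Finset.inf'_congr hSne rfl
        intro e he
        rcases eq_or_ne e j with rfl | hej
        · rw [Function.update_self]
        · have hei : e ≠ i := fun h => hiS (h ▸ he)
          rw [Function.update_of_ne hej, Function.update_of_ne hei]
      rw [hysplit, h1, h2]
      exact sup_le (le_median hk1 hkn x hS'card hS'ne) (le_median hk1 hkn x hS hSne)
    · -- neither
      have : S.inf' hSne y = S.inf' hSne x := by
        apply Finset.inf'_congr hSne rfl
        intro e he
        exact hyo e (fun h => hiS (h ▸ he)) (fun h => hjS (h ▸ he))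
      rw [this]; exact le_median hk1 hkn x hS hSne
  · apply median_le
    intro S hS hSne
    by_cases hiS : i ∈ S <;> by_cases hjS : j ∈ S
    · rw [← hboth S hSne hiS hjS]
      exact le_median hk1 hkn y hS hSne
    · -- i ∈ S, j ∉ S : move to S'' = insert j (S.erase i)
      have hjS' : j ∉ S.erase i := fun h => hjS (Finset.mem_of_mem_erase h)
      set S'' : Finset (Fin n) := insert j (S.erase i) with hS''
      have hS''card : S'' ∈ Finset.univ.powersetCard (n + 1 - k) := by
        rw [mem_psc, Finset.card_insert_of_notMem hjS', Finset.card_erase_of_mem hiS]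
        have h1 := mem_psc.mp hS
        have h2 : 1 ≤ S.card := Finset.card_pos.mpr hSne
        omega
      have hS''ne : S''.Nonempty := ⟨j, Finset.mem_insert_self _ _⟩
      refine le_trans ?_ (le_median hk1 hkn y hS''card hS''ne)
      apply Finset.le_inf'
      intro e he
      rcases Finset.mem_insert.mp he with rfl | he'
      · rw [hyj]
        exact (Finset.inf'_le _ hiS).trans le_sup_left
      · obtain ⟨hei, heS⟩ := Finset.mem_erase.mp he'
        have hej : e ≠ j := fun h => hjS (h ▸ heS)
        exact (Finset.inf'_le _ heS).trans_eq (hyo e hei hej).symm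
    · -- j ∈ S, i ∉ S : pointwise
      refine le_trans ?_ (le_median hk1 hkn y hS hSne)
      apply Finset.le_inf'
      intro e he
      rcases eq_or_ne e j with rfl | hej
      · rw [hyj]
        exact (Finset.inf'_le _ hjS).trans le_sup_right
      · have hei : e ≠ i := fun h => hiS (h ▸ he)
        exact (Finset.inf'_le _ he).trans_eq (hyo e hei hej).symm
    · have : S.inf' hSne y = S.inf' hSne x := by
        apply Finset.inf'_congr hSne rfl
        intro e he
        exact hyo e (fun h => hiS (h ▸ he)) (fun h => hjS (h ▸ he))
      rw [← this]; exact le_median hk1 hkn y hS hSne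

end Comp
section Tpres

variable {L M : Type*} [DistribLattice L] [DistribLattice M] {n : ℕ}

lemma T_comp {T : (Fin n → L) → M} (hT : IsLatticeMultiHom T) (hsym : IsSymmetricMap T)
    {i j : Fin n} (hij : i ≠ j) (x : Fin n → L) : T (comp i j x) = T x := by
  set F : L → L → M := fun p q => T (Function.update (Function.update x i p) j q) with hF
  have key : ∀ p q c : L,
      Function.update (Function.update (Function.update x i p) j q) i c =
        Function.update (Function.update x i c) j q := by
    intro p q c
    rw [Function.update_comm hij.symm, Function.update_idem]
  have hyi : ∀ p q : L, (Function.update (Function.update x i p) j q) i = p := by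
    intro p q
    rw [Function.update_of_ne hij, Function.update_self]
  have hFi_sup : ∀ p p' q : L, F (p ⊔ p') q = F p q ⊔ F p' q := by
    intro p p' q
    have h := (hT (Function.update (Function.update x i p) j q) i p').1
    rw [hyi, key, key] at h
    exact h
  have hFi_inf : ∀ p p' q : L, F (p ⊓ p') q = F p q ⊓ F p' q := by
    intro p p' q
    have h := (hT (Function.update (Function.update x i p) j q) i p').2
    rw [hyi, key, key] at h
    exact h
  have hFj_sup : ∀ p q q' : L, F p (q ⊔ q') = F p q ⊔ F p q' := by
    intro p q q'
    have h := (hT (Function.update (Function.update x i p) j q) j q').1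
    rw [Function.update_self, Function.update_idem, Function.update_idem] at h
    exact h
  have hFj_inf : ∀ p q q' : L, F p (q ⊓ q') = F p q ⊓ F p q' := by
    intro p q q'
    have h := (hT (Function.update (Function.update x i p) j q) j q').2
    rw [Function.update_self, Function.update_idem, Function.update_idem] at h
    exact h
  have hswap : ∀ p q : L, F p q = F q p := by
    intro p q
    have hcomp : (Function.update (Function.update x i q) j p) ∘ (Equiv.swap i j) =
        Function.update (Function.update x i p) j q := by
      funext e
      rcases eq_or_ne e i with rfl | hei
      · rw [Function.comp_apply, Equiv.swap_apply_left, Function.update_self,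
          Function.update_of_ne hij, Function.update_self]
      rcases eq_or_ne e j with rfl | hej
      · rw [Function.comp_apply, Equiv.swap_apply_right, Function.update_of_ne hij,
          Function.update_self, Function.update_self]
      · rw [Function.comp_apply, Equiv.swap_apply_of_ne_of_ne hei hej,
          Function.update_of_ne hej, Function.update_of_ne hei,
          Function.update_of_ne hej, Function.update_of_ne hei]
    have h := hsym (Equiv.swap i j) (Function.update (Function.update x i q) j p)
    rw [hcomp] at h
    exact h
  set a := x i
  set b := x j
  set u := F a a
  set v := F b b
  set c := F a b with hc
  have hba : F b a = c := hswap b a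
  have e1 : F (a ⊔ b) (a ⊓ b) = c ⊓ (u ⊔ v) := by
    rw [hFi_sup, hFj_inf, hFj_inf, hba]
    rw [inf_comm u c, sup_comm]
    rw [← inf_sup_left]
    rw [sup_comm]
  have e2 : F (a ⊓ b) (a ⊔ b) = c ⊔ (u ⊓ v) := by
    rw [hFi_inf, hFj_sup, hFj_sup, hba]
    rw [sup_comm u c, inf_comm]
    rw [← sup_inf_left]
    rw [inf_comm]
  have e3 : F (a ⊓ b) (a ⊔ b) = F (a ⊔ b) (a ⊓ b) := hswap _ _
  have e4 : F (a ⊓ b) (a ⊔ b) = c := by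
    apply le_antisymm
    · rw [e3, e1]; exact inf_le_left
    · rw [e2]; exact le_sup_left
  have e5 : T (comp i j x) = F (a ⊓ b) (a ⊔ b) := rfl
  have e6 : F a b = T x := by
    rw [hF]
    simp only [a, b, Function.update_eq_self]
  rw [e5, e4, hc, e6]

/-- reachability by ascending comparators -/
inductive Reach_s10 : (Fin n → L) → (Fin n → L) → Prop
  | refl (x : Fin n → L) : Reach_s10 x x
  | step {x y : Fin n → L} (i j : Fin n) (h : i < j) : Reach_s10 x y → Reach_s10 x (comp i j y)

lemma Reach_s10.trans {x y z : Fin n → L} (h1 : Reach_s10 x y) (h2 : Reach_s10 y z) : Reach_s10 x z := by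
  induction h2 with
  | refl => exact h1
  | step i j h _ ih => exact Reach_s10.step i j h ih

lemma Reach_s10.T_eq {T : (Fin n → L) → M} (hT : IsLatticeMultiHom T) (hsym : IsSymmetricMap T)
    {x y : Fin n → L} (h : Reach_s10 x y) : T x = T y := by
  induction h with
  | refl => rfl
  | step i j hlt _ ih => rw [ih, T_comp hT hsym (Fin.ne_of_lt hlt)]

lemma Reach_s10.median_eq {k : ℕ} (hk1 : 1 ≤ k) (hkn : k ≤ n) {x y : Fin n → L}
    (h : Reach_s10 x y) : median k hk1 hkn x = median k hk1 hkn y := by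
  induction h with
  | refl => rfl
  | step i j hlt _ ih => rw [ih, median_comp hk1 hkn (Fin.ne_of_lt hlt)]

end Tpres
section Sorting

variable {L : Type*} [DistribLattice L] {n : ℕ}

lemma reach_monotone (x : Fin n → L) : ∃ y, Reach_s10 x y ∧ Monotone y := by
  suffices h : ∀ d m, m + d = n → ∀ x : Fin n → L,
      (∀ p q : Fin n, p ≤ q → q.1 < m → x p ≤ x q) → ∃ y, Reach_s10 x y ∧ Monotone y by
    exact h n 0 (by omega) x (fun p q _ hq => absurd hq (by omega))
  intro d
  induction d with
  | zero =>
    intro m hm x hx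
    refine ⟨x, Reach_s10.refl x, fun p q hpq => ?_⟩
    rcases eq_or_lt_of_le hpq with rfl | hlt
    · exact le_rfl
    · exact hx p q hpq (by omega)
  | succ d ih =>
    intro m hm x hx
    have hmn : m < n := by omega
    -- insert x m into the sorted prefix by bubbling it down
    have inner : ∀ s, s ≤ m → ∃ w, Reach_s10 x w ∧
        (∀ e : Fin n, e.1 < m - s ∨ m < e.1 → w e = x e) ∧
        (∀ p q : Fin n, p ≤ q → m - s ≤ p.1 → q.1 ≤ m → w p ≤ w q) ∧
        (∀ e : Fin n, m - s < e.1 → (he : e.1 ≤ m) → x ⟨e.1 - 1, by omega⟩ ≤ w e) := by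
      intro s
      induction s with
      | zero =>
        intro _
        refine ⟨x, Reach_s10.refl x, fun e _ => rfl, fun p q hpq hp hq => ?_, fun e h1 h2 => ?_⟩
        · have : p = q := Fin.ext (by have := Fin.le_def.mp hpq; omega)
          rw [this]
        · exact absurd h2 (by omega)
      | succ s ihs =>
        intro hs1
        obtain ⟨w, hwr, hw2, hw3, hw4⟩ := ihs (by omega)
        set t := m - s with ht
        have ht1 : 1 ≤ t := by omega
        have htn : t < n := by omega
        set i' : Fin n := ⟨t - 1, by omega⟩ with hi'
        set j' : Fin n := ⟨t, by omega⟩ with hj'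
        have hij : i' < j' := by
          rw [Fin.lt_def]; simp only [hi', hj']; omega
        have hijne : i' ≠ j' := Fin.ne_of_lt hij
        set w' := comp i' j' w with hw'
        have hwi : w i' = x i' := hw2 i' (Or.inl (by simp [hi']; omega))
        have hv_i : w' i' = x i' ⊓ w j' := by rw [hw', comp_apply_i hijne, hwi]
        have hv_j : w' j' = x i' ⊔ w j' := by rw [hw', comp_apply_j, hwi]
        have hv_o : ∀ e : Fin n, e ≠ i' → e ≠ j' → w' e = w e :=
          fun e h1 h2 => comp_apply_other h1 h2 w
        have hms : m - (s + 1) = t - 1 := by omega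
        refine ⟨w', Reach_s10.step i' j' hij hwr, ?_, ?_, ?_⟩
        · intro e he
          rw [hms] at he
          have hei : e ≠ i' := by
            intro h; rw [h] at he; simp only [hi'] at he; omega
          have hej : e ≠ j' := by
            intro h; rw [h] at he; simp only [hj'] at he; omega
          rw [hv_o e hei hej]
          apply hw2
          rcases he with h | h
          · left; omega
          · right; exact h
        · intro p q hpq hp hq
          rw [hms] at hp
          have hpq' : p.1 ≤ q.1 := Fin.le_def.mp hpq
          rcases eq_or_lt_of_le hpq with rfl | hlt
          · exact le_rfl
          have hlt' : p.1 < q.1 := Fin.lt_def.mp hlt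
          rcases Nat.lt_or_ge p.1 t with hpt | hpt
          · -- p.1 = t - 1, i.e. p = i'
            have hp_eq : p = i' := Fin.ext (by simp [hi']; omega)
            subst hp_eq
            rcases Nat.lt_or_ge q.1 (t + 1) with hqt | hqt
            · -- q = j'
              have hq_eq : q = j' := Fin.ext (by simp [hj']; omega)
              subst hq_eq
              rw [hv_i, hv_j]
              exact le_trans inf_le_left le_sup_left
            · -- q beyond j'
              have hqi : q ≠ i' := Fin.ne_of_gt hlt
              have hqj : q ≠ j' := by
                intro h; rw [h] at hqt; simp only [hj'] at hqt; omega
              rw [hv_i, hv_o q hqi hqj]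
              exact le_trans inf_le_right (hw3 j' q (Fin.le_def.mpr (by simp [hj']; omega))
                (by simp [hj']) hq)
          · rcases Nat.lt_or_ge p.1 (t + 1) with hpt' | hpt'
            · -- p = j'
              have hp_eq : p = j' := Fin.ext (by simp [hj']; omega)
              subst hp_eq
              have hqj : q ≠ j' := Fin.ne_of_gt hlt
              have hqi : q ≠ i' := by
                intro h; rw [h] at hlt'; simp only [hi'] at hlt'; omega
              rw [hv_j, hv_o q hqi hqj]
              apply sup_le
              · -- x i' ≤ w q  via hw4 and prefix sortedness
                have hq4 := hw4 q (by omega) hq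
                refine le_trans ?_ hq4
                exact hx i' ⟨q.1 - 1, by omega⟩ (Fin.le_def.mpr (by simp [hi']; omega))
                  (by simp; omega)
              · exact hw3 j' q (Fin.le_def.mpr (by simp [hj']; omega)) (by simp [hj']) hq
            · -- both beyond j'
              have hpj : p ≠ j' := by
                intro h; rw [h] at hpt'; simp only [hj'] at hpt'; omega
              have hpi : p ≠ i' := by
                intro h; rw [h] at hpt; simp only [hi'] at hpt; omega
              have hqj : q ≠ j' := by
                intro h; rw [h] at hlt'; simp only [hj'] at hlt'; omega
              have hqi : q ≠ i' := by
                intro h; rw [h] at hlt'; simp only [hi'] at hlt'; omega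
              rw [hv_o p hpi hpj, hv_o q hqi hqj]
              exact hw3 p q hpq (by omega) hq
        · intro e h1 h2
          rw [hms] at h1
          rcases Nat.lt_or_ge e.1 (t + 1) with het | het
          · -- e = j'
            have he_eq : e = j' := Fin.ext (by simp [hj']; omega)
            subst he_eq
            rw [hv_j]
            have : (⟨(j' : Fin n).1 - 1, by omega⟩ : Fin n) = i' := Fin.ext (by simp [hi', hj'])
            rw [this]
            exact le_sup_left
          · have hej : e ≠ j' := by
              intro h; rw [h] at het; simp only [hj'] at het; omega
            have hei : e ≠ i' := by
              intro h; rw [h] at het; simp only [hi'] at het; omega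
            rw [hv_o e hei hej]
            exact hw4 e (by omega) h2
    obtain ⟨w, hwr, _, hw3, _⟩ := inner m le_rfl
    have hw_sorted : ∀ p q : Fin n, p ≤ q → q.1 < m + 1 → w p ≤ w q := by
      intro p q hpq hq
      exact hw3 p q hpq (by omega) (by omega)
    obtain ⟨y, hy, hymono⟩ := ih (m + 1) (by omega) w hw_sorted
    exact ⟨y, hwr.trans hy, hymono⟩

end Sorting
/-- A lattice n-homomorphism between distributive lattices is total orderization
invariant iff it is symmetric. -/
theorem multiHom_toi_iff_symmetric {L M : Type*} [DistribLattice L] [DistribLattice M]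
    {n : ℕ} (hn : 2 ≤ n) (T : (Fin n → L) → M) (hT : IsLatticeMultiHom T) :
    TotalOrderizationInvariant T ↔ IsSymmetricMap T := by
  constructor
  · intro hTOI σ x
    rw [hTOI (x ∘ σ), hTOI x]
    congr 1
    funext k
    exact median_perm σ _ _ x
  · intro hsym x
    obtain ⟨y, hxy, hy⟩ := reach_monotone x
    have hTx : T x = T y := hxy.T_eq hT hsym
    have hmed : (fun k : Fin n =>
        median (k.1 + 1) (Nat.succ_le_succ (Nat.zero_le _)) k.2 x) = y := by
      funext k
      rw [hxy.median_eq (Nat.succ_le_succ (Nat.zero_le _)) k.2]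
      exact median_monotone hy k _ k.2
    rw [hmed]
    exact hTx
end

section
/- Let T : L^n → M be a symmetric lattice n-homomorphism between distributive lattices, n ≥ 2, with diagonal P_T(x) := T(x,...,x). Then P_T is a lattice homomorphism if and only if for all x, y ∈ L and every k ∈ {1,...,n-1}, P_T(x) ∧ P_T(y) ≤ T(x^k, y^{n-k}) ≤ P_T(x) ∨ P_T(y), where T(x^k, y^{n-k}) denotes T with x in k arguments and y in n-k arguments. -/
section Aux

variable {L M : Type*} [DistribLattice L] [DistribLattice M] {n : ℕ}

/-- `x` on the first `a` coordinates, `z` on the next `b`, `y` on the rest. -/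
private def stair (x y z : L) (a b : ℕ) : Fin n → L :=
  fun i => if i.1 < a then x else if i.1 < a + b then z else y

private lemma stair_zero (x y z : L) (a : ℕ) :
    (stair x y z a 0 : Fin n → L) = fun i => if i.1 < a then x else y := by
  funext i
  simp only [stair, Nat.add_zero]
  split_ifs <;> rfl

private lemma stair_apex (x y z : L) (a b : ℕ) (i0 : Fin n) (hi0 : i0.1 = a + b) :
    stair x y z a b i0 = y := by
  simp only [stair, hi0]
  rw [if_neg (by omega), if_neg (by omega)]

private lemma stair_update (x y z : L) (a b : ℕ) (i0 : Fin n) (hi0 : i0.1 = a + b) :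
    Function.update (stair x y z a b) i0 z = stair x y z a (b + 1) := by
  funext i
  by_cases hi : i = i0
  · rw [hi, Function.update_self]
    simp only [stair]
    split_ifs <;> first | rfl | (exfalso; omega)
  · rw [Function.update_of_ne hi]
    have hi' : i.1 ≠ a + b := fun h => hi (Fin.ext (h.trans hi0.symm))
    simp only [stair]
    split_ifs <;> first | rfl | (exfalso; omega)

private lemma stair_swap (x y z : L) (a b : ℕ) (ja i0 : Fin n)
    (hja : ja.1 = a) (hi0 : i0.1 = a + b) :
    (Function.update (stair x y z a b) i0 x) ∘ (Equiv.swap ja i0) =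
      stair x y z (a + 1) b := by
  funext i
  simp only [Function.comp_apply]
  by_cases hij : i = ja
  · rw [hij, Equiv.swap_apply_left, Function.update_self]
    simp only [stair]
    split_ifs <;> first | rfl | (exfalso; omega)
  · by_cases hii : i = i0
    · have hne : ja ≠ i0 := fun hh => hij (hii.trans hh.symm)
      have hb : 1 ≤ b := by
        by_contra hb0
        exact hne (Fin.ext (by omega))
      rw [hii, Equiv.swap_apply_right, Function.update_of_ne hne]
      simp only [stair]
      split_ifs <;> first | rfl | (exfalso; omega)
    · rw [Equiv.swap_apply_of_ne_of_ne hij hii, Function.update_of_ne hii]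
      have h1 : i.1 ≠ a := fun hh => hij (Fin.ext (hh.trans hja.symm))
      have h2 : i.1 ≠ a + b := fun hh => hii (Fin.ext (hh.trans hi0.symm))
      simp only [stair]
      split_ifs <;> first | rfl | (exfalso; omega)

private lemma step_sup (T : (Fin n → L) → M) (hT : IsLatticeMultiHom T)
    (hsymm : IsSymmetricMap T) (x y : L) (a b : ℕ) (h : a + b + 1 ≤ n) :
    T (stair x y (x ⊔ y) a (b + 1)) =
      T (stair x y (x ⊔ y) a b) ⊔ T (stair x y (x ⊔ y) (a + 1) b) := by
  set i0 : Fin n := ⟨a + b, by omega⟩ with hi0def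
  set ja : Fin n := ⟨a, by omega⟩ with hjadef
  have hi0 : i0.1 = a + b := rfl
  have hja : ja.1 = a := rfl
  have e1 := (hT (stair x y (x ⊔ y) a b) i0 x).1
  rw [stair_apex x y (x ⊔ y) a b i0 hi0] at e1
  rw [sup_comm y x] at e1
  rw [stair_update x y (x ⊔ y) a b i0 hi0] at e1
  have e2 := hsymm (Equiv.swap ja i0) (Function.update (stair x y (x ⊔ y) a b) i0 x)
  rw [stair_swap x y (x ⊔ y) a b ja i0 hja hi0] at e2
  rw [e1, e2]

private lemma step_inf (T : (Fin n → L) → M) (hT : IsLatticeMultiHom T)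
    (hsymm : IsSymmetricMap T) (x y : L) (a b : ℕ) (h : a + b + 1 ≤ n) :
    T (stair x y (x ⊓ y) a (b + 1)) =
      T (stair x y (x ⊓ y) a b) ⊓ T (stair x y (x ⊓ y) (a + 1) b) := by
  set i0 : Fin n := ⟨a + b, by omega⟩ with hi0def
  set ja : Fin n := ⟨a, by omega⟩ with hjadef
  have hi0 : i0.1 = a + b := rfl
  have hja : ja.1 = a := rfl
  have e1 := (hT (stair x y (x ⊓ y) a b) i0 x).2
  rw [stair_apex x y (x ⊓ y) a b i0 hi0] at e1
  rw [inf_comm y x] at e1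
  rw [stair_update x y (x ⊓ y) a b i0 hi0] at e1
  have e2 := hsymm (Equiv.swap ja i0) (Function.update (stair x y (x ⊓ y) a b) i0 x)
  rw [stair_swap x y (x ⊓ y) a b ja i0 hja hi0] at e2
  rw [e1, e2]

private lemma decomp_sup (T : (Fin n → L) → M) (hT : IsLatticeMultiHom T)
    (hsymm : IsSymmetricMap T) (x y : L) :
    ∀ (b a : ℕ), a + b ≤ n →
      T (stair x y (x ⊔ y) a b) =
        (Finset.range (b + 1)).sup' (by simp)
          (fun j => T (fun i => if i.1 < a + j then x else y)) := by
  intro b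
  induction b with
  | zero =>
    intro a ha
    rw [stair_zero]
    simp
  | succ b IH =>
    intro a ha
    rw [step_sup T hT hsymm x y a b (by omega), IH a (by omega), IH (a + 1) (by omega)]
    apply le_antisymm
    · apply sup_le
      · apply Finset.sup'_le
        intro j hj
        refine Finset.le_sup' (fun j => T fun i => if i.1 < a + j then x else y)
          (Finset.mem_range.mpr ?_)
        have := Finset.mem_range.mp hj; omega
      · apply Finset.sup'_le
        intro j hj
        have hrw : a + 1 + j = a + (j + 1) := by omega
        rw [hrw]
        refine Finset.le_sup' (fun j => T fun i => if i.1 < a + j then x else y)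
          (Finset.mem_range.mpr ?_)
        have := Finset.mem_range.mp hj; omega
    · apply Finset.sup'_le
      intro j hj
      have hj' := Finset.mem_range.mp hj
      by_cases hjb : j < b + 1
      · exact le_sup_of_le_left (Finset.le_sup'
          (fun j => T fun i => if i.1 < a + j then x else y) (Finset.mem_range.mpr hjb))
      · have hje : j = b + 1 := by omega
        subst hje
        have hrw : a + (b + 1) = a + 1 + b := by omega
        rw [hrw]
        exact le_sup_of_le_right (Finset.le_sup'
          (fun j => T fun i => if i.1 < a + 1 + j then x else y)
          (Finset.mem_range.mpr (show b < b + 1 by omega)))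

private lemma decomp_inf (T : (Fin n → L) → M) (hT : IsLatticeMultiHom T)
    (hsymm : IsSymmetricMap T) (x y : L) :
    ∀ (b a : ℕ), a + b ≤ n →
      T (stair x y (x ⊓ y) a b) =
        (Finset.range (b + 1)).inf' (by simp)
          (fun j => T (fun i => if i.1 < a + j then x else y)) := by
  intro b
  induction b with
  | zero =>
    intro a ha
    rw [stair_zero]
    simp
  | succ b IH =>
    intro a ha
    rw [step_inf T hT hsymm x y a b (by omega), IH a (by omega), IH (a + 1) (by omega)]
    apply le_antisymm
    · apply Finset.le_inf'
      intro j hj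
      have hj' := Finset.mem_range.mp hj
      by_cases hjb : j < b + 1
      · exact inf_le_of_left_le (Finset.inf'_le
          (fun j => T fun i => if i.1 < a + j then x else y) (Finset.mem_range.mpr hjb))
      · have hje : j = b + 1 := by omega
        subst hje
        have hrw : a + (b + 1) = a + 1 + b := by omega
        rw [hrw]
        exact inf_le_of_right_le (Finset.inf'_le
          (fun j => T fun i => if i.1 < a + 1 + j then x else y)
          (Finset.mem_range.mpr (show b < b + 1 by omega)))
    · apply le_inf
      · apply Finset.le_inf'
        intro j hj
        refine Finset.inf'_le (fun j => T fun i => if i.1 < a + j then x else y)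
          (Finset.mem_range.mpr ?_)
        have := Finset.mem_range.mp hj; omega
      · apply Finset.le_inf'
        intro j hj
        have hrw : a + 1 + j = a + (j + 1) := by omega
        rw [hrw]
        refine Finset.inf'_le (fun j => T fun i => if i.1 < a + j then x else y)
          (Finset.mem_range.mpr ?_)
        have := Finset.mem_range.mp hj; omega

private lemma const_sup_eq (T : (Fin n → L) → M) (hT : IsLatticeMultiHom T)
    (hsymm : IsSymmetricMap T) (x y : L) :
    T (fun _ => x ⊔ y) =
      (Finset.range (n + 1)).sup' (by simp)
        (fun k => T (fun i => if i.1 < k then x else y)) := by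
  have h := decomp_sup T hT hsymm x y n 0 (by omega)
  have hstair : (stair x y (x ⊔ y) 0 n : Fin n → L) = fun _ => x ⊔ y := by
    funext i
    simp only [stair]
    rw [if_neg (by omega), if_pos (by simp only [Nat.zero_add]; exact i.isLt)]
  rw [hstair] at h
  simp only [Nat.zero_add] at h
  exact h

private lemma const_inf_eq (T : (Fin n → L) → M) (hT : IsLatticeMultiHom T)
    (hsymm : IsSymmetricMap T) (x y : L) :
    T (fun _ => x ⊓ y) =
      (Finset.range (n + 1)).inf' (by simp)
        (fun k => T (fun i => if i.1 < k then x else y)) := by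
  have h := decomp_inf T hT hsymm x y n 0 (by omega)
  have hstair : (stair x y (x ⊓ y) 0 n : Fin n → L) = fun _ => x ⊓ y := by
    funext i
    simp only [stair]
    rw [if_neg (by omega), if_pos (by simp only [Nat.zero_add]; exact i.isLt)]
  rw [hstair] at h
  simp only [Nat.zero_add] at h
  exact h

end Aux

/-- The diagonal of a symmetric lattice n-homomorphism is a lattice homomorphism iff
P_T(x) ⊓ P_T(y) ≤ T(xᵏ, yⁿ⁻ᵏ) ≤ P_T(x) ⊔ P_T(y) for all x, y and 1 ≤ k ≤ n-1. -/
theorem diagonal_latticeHom_iff_two {L M : Type*} [DistribLattice L] [DistribLattice M]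
    {n : ℕ} (hn : 2 ≤ n) (T : (Fin n → L) → M) (hT : IsLatticeMultiHom T)
    (hsymm : IsSymmetricMap T) :
    IsLatticeHomMap (fun x : L => T fun _ => x) ↔
      ∀ (x y : L) (k : ℕ), 1 ≤ k → k ≤ n - 1 →
        ((T fun _ => x) ⊓ (T fun _ => y) ≤ T (fun i => if i.1 < k then x else y) ∧
         T (fun i => if i.1 < k then x else y) ≤ (T fun _ => x) ⊔ (T fun _ => y)) := by
  have hTk0 : ∀ x y : L, (fun i : Fin n => if i.1 < 0 then x else y) = fun _ => y := by
    intro x y; funext i; rw [if_neg (by omega)]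
  have hTkn : ∀ x y : L, (fun i : Fin n => if i.1 < n then x else y) = fun _ => x := by
    intro x y; funext i; rw [if_pos i.isLt]
  constructor
  · intro hP x y k hk1 hkn
    constructor
    · calc (T fun _ => x) ⊓ (T fun _ => y) = T (fun _ => x ⊓ y) := ((hP x y).2).symm
        _ = (Finset.range (n + 1)).inf' (by simp)
              (fun k => T (fun i => if i.1 < k then x else y)) :=
          const_inf_eq T hT hsymm x y
        _ ≤ T (fun i => if i.1 < k then x else y) :=
          Finset.inf'_le (fun k => T fun i => if i.1 < k then x else y)
            (Finset.mem_range.mpr (show k < n + 1 by omega))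
    · calc T (fun i => if i.1 < k then x else y)
          ≤ (Finset.range (n + 1)).sup' (by simp)
              (fun k => T (fun i => if i.1 < k then x else y)) :=
          Finset.le_sup' (fun k => T fun i => if i.1 < k then x else y)
            (Finset.mem_range.mpr (show k < n + 1 by omega))
        _ = T (fun _ => x ⊔ y) := (const_sup_eq T hT hsymm x y).symm
        _ = (T fun _ => x) ⊔ (T fun _ => y) := (hP x y).1
  · intro h x y
    constructor
    · show T (fun _ => x ⊔ y) = (T fun _ => x) ⊔ (T fun _ => y)
      rw [const_sup_eq T hT hsymm x y]
      apply le_antisymm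
      · apply Finset.sup'_le
        intro k hk
        have hk' := Finset.mem_range.mp hk
        rcases Nat.eq_zero_or_pos k with hk0 | hk0
        · subst hk0; rw [hTk0]; exact le_sup_right
        · by_cases hkn : k = n
          · subst hkn; rw [hTkn]; exact le_sup_left
          · exact (h x y k hk0 (by omega)).2
      · apply sup_le
        · have := Finset.le_sup' (fun k => T (fun i : Fin n => if i.1 < k then x else y))
            (Finset.mem_range.mpr (show n < n + 1 by omega))
          rwa [hTkn] at this
        · have := Finset.le_sup' (fun k => T (fun i : Fin n => if i.1 < k then x else y))
            (Finset.mem_range.mpr (show 0 < n + 1 by omega))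
          rwa [hTk0] at this
    · show T (fun _ => x ⊓ y) = (T fun _ => x) ⊓ (T fun _ => y)
      rw [const_inf_eq T hT hsymm x y]
      apply le_antisymm
      · apply le_inf
        · have := Finset.inf'_le (fun k => T (fun i : Fin n => if i.1 < k then x else y))
            (Finset.mem_range.mpr (show n < n + 1 by omega))
          rwa [hTkn] at this
        · have := Finset.inf'_le (fun k => T (fun i : Fin n => if i.1 < k then x else y))
            (Finset.mem_range.mpr (show 0 < n + 1 by omega))
          rwa [hTk0] at this
      · apply Finset.le_inf'
        intro k hk
        have hk' := Finset.mem_range.mp hk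
        rcases Nat.eq_zero_or_pos k with hk0 | hk0
        · subst hk0; rw [hTk0]; exact inf_le_right
        · by_cases hkn : k = n
          · subst hkn; rw [hTkn]; exact inf_le_left
          · exact (h x y k hk0 (by omega)).1
end

section
/- Let T : L^n → M be a symmetric lattice n-homomorphism between distributive lattices, n ≥ 2, and let j, m, p satisfy 1 ≤ m ≤ p ≤ p + j ≤ n - 1. Then for all x, y ∈ L: ⋁_{i=m}^{p} T(x^i, y^{n-i-j}, (x∧y)^j) = ⋁_{i=m-1}^{p} T(x^i, y^{n-i-j-1}, (x∧y)^{j+1}), where T(a^r, b^s, c^t) denotes T applied with a repeated r times, b repeated s times, and c repeated t times (r+s+t = n). -/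
def chainVec {L : Type*} [DistribLattice L] (n j i : ℕ) (x y : L) : Fin n → L :=
  fun t => if t.1 < i then x else if t.1 < n - j then y else x ⊓ y

lemma two_coord_ineq {L M : Type*} [DistribLattice L] [DistribLattice M] {n : ℕ}
    (T : (Fin n → L) → M) (hT : IsLatticeMultiHom T)
    (w : Fin n → L) (c d : Fin n) (hcd : c ≠ d) (x y : L)
    (hsym : T (Function.update (Function.update w c y) d x)
          = T (Function.update (Function.update w c x) d y)) :
    T (Function.update (Function.update w c x) d y)
      ≤ T (Function.update (Function.update w c x) d x)
        ⊔ T (Function.update (Function.update w c y) d y) := by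
  set F : L → L → M := fun u v => T (Function.update (Function.update w c u) d v) with hF
  have key1 : ∀ u v v', F u (v ⊔ v') = F u v ⊔ F u v' ∧ F u (v ⊓ v') = F u v ⊓ F u v' := by
    intro u v v'
    have h := hT (Function.update (Function.update w c u) d v) d v'
    simpa [Function.update_idem, hF] using h
  have key2 : ∀ u u' v, F (u ⊔ u') v = F u v ⊔ F u' v ∧ F (u ⊓ u') v = F u v ⊓ F u' v := by
    intro u u' v
    have h := hT (Function.update (Function.update w c u) d v) c u'
    have hc : (Function.update (Function.update w c u) d v) c = u := by
      rw [Function.update_of_ne hcd, Function.update_self]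
    rw [hc] at h
    have huu : ∀ s : L, Function.update (Function.update (Function.update w c u) d v) c s
        = Function.update (Function.update w c s) d v := by
      intro s
      rw [Function.update_comm hcd.symm, Function.update_idem, Function.update_comm hcd]
    simp only [huu] at h
    simpa [hF] using h
  have hsym' : F y x = F x y := hsym
  have e1 : F (x ⊓ y) (x ⊔ y) = (F x x ⊓ F y x) ⊔ (F x y ⊓ F y y) := by
    rw [(key1 (x ⊓ y) x y).1, (key2 x y x).2, (key2 x y y).2]
  have e2 : F (x ⊓ y) (x ⊔ y) = (F x x ⊔ F x y) ⊓ (F y x ⊔ F y y) := by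
    rw [(key2 x y (x ⊔ y)).2, (key1 x x y).1, (key1 y x y).1]
  have hmain : F x y ≤ (F x x ⊓ F y x) ⊔ (F x y ⊓ F y y) := by
    rw [e1.symm, e2, hsym']
    exact le_inf le_sup_right le_sup_left
  calc F x y ≤ (F x x ⊓ F y x) ⊔ (F x y ⊓ F y y) := hmain
    _ ≤ F x x ⊔ F y y := sup_le_sup inf_le_left inf_le_right

/-- For a symmetric lattice n-homomorphism T and 1 ≤ m ≤ p ≤ p + j ≤ n - 1,
⋁_{i=m}^{p} T(xⁱ, yⁿ⁻ⁱ⁻ʲ, (x⊓y)ʲ) = ⋁_{i=m-1}^{p} T(xⁱ, yⁿ⁻ⁱ⁻ʲ⁻¹, (x⊓y)ʲ⁺¹). -/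
theorem symm_multiHom_sup_shift {L M : Type*} [DistribLattice L] [DistribLattice M]
    {n : ℕ} (hn : 2 ≤ n) (T : (Fin n → L) → M) (hT : IsLatticeMultiHom T)
    (hsymm : IsSymmetricMap T) (j m p : ℕ) (hm : 1 ≤ m) (hmp : m ≤ p)
    (hpn : p + j ≤ n - 1) (x y : L) :
    ((Finset.Icc m p).sup' (Finset.nonempty_Icc.mpr hmp)
        (fun i => T fun t => if t.1 < i then x else if t.1 < n - j then y else x ⊓ y)) =
      (Finset.Icc (m - 1) p).sup' (Finset.nonempty_Icc.mpr (by omega))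
        (fun i => T fun t =>
          if t.1 < i then x else if t.1 < n - (j + 1) then y else x ⊓ y) := by
  change ((Finset.Icc m p).sup' (Finset.nonempty_Icc.mpr hmp)
        (fun i => T (chainVec n j i x y))) =
      (Finset.Icc (m - 1) p).sup' (Finset.nonempty_Icc.mpr (by omega))
        (fun i => T (chainVec n (j+1) i x y))
  -- Step A: the (j+1)-terms are meets of consecutive j-terms
  have stepA : ∀ k, k ≤ p →
      T (chainVec n (j+1) k x y)
        = T (chainVec n j k x y) ⊓ T (chainVec n j (k+1) x y) := by
    intro k hk
    have hkn : k < n := by omega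
    have hcn : n - j - 1 < n := by omega
    set c : Fin n := ⟨n - j - 1, hcn⟩ with hc
    set kk : Fin n := ⟨k, hkn⟩ with hkk
    set w : Fin n → L := chainVec n j k x y with hw
    set u : Fin n → L := Function.update w c x with hu
    have huc : u c = x := Function.update_self _ _ _
    have h := (hT u c y).2
    rw [huc] at h
    have e1 : Function.update u c (x ⊓ y) = chainVec n (j+1) k x y := by
      rw [hu, Function.update_idem]
      funext t; rcases t with ⟨tv, htv⟩
      simp only [Function.update_apply, hw, hc, chainVec, Fin.mk.injEq, Fin.val_mk]
      split_ifs <;> first | rfl | (exfalso; omega) | (exfalso; simp only [Fin.val_mk, Fin.mk.injEq] at *; omega)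
    have e2 : T u = T (chainVec n j (k+1) x y) := by
      have hσ := hsymm (Equiv.swap kk c) (chainVec n j (k+1) x y)
      rw [← hσ]
      congr 1
      funext t; rcases t with ⟨tv, htv⟩
      simp only [hu, hw, hc, hkk, Function.comp_apply, Equiv.swap_apply_def,
        Function.update_apply, chainVec, Fin.mk.injEq, Fin.val_mk]
      split_ifs <;> first | rfl | (exfalso; omega) | (exfalso; simp only [Fin.val_mk, Fin.mk.injEq] at *; omega)
    have e3 : Function.update u c y = w := by
      rw [hu, Function.update_idem]
      funext t; rcases t with ⟨tv, htv⟩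
      simp only [Function.update_apply, hw, hc, chainVec, Fin.mk.injEq, Fin.val_mk]
      split_ifs <;> first | rfl | (exfalso; omega) | (exfalso; simp only [Fin.val_mk, Fin.mk.injEq] at *; omega)
    rw [e1, e2, e3] at h
    rw [h, inf_comm]
  -- Step B: middle term below join of neighbours
  have stepB : ∀ i : ℕ, m ≤ i → i ≤ p →
      T (chainVec n j i x y)
        ≤ T (chainVec n j (i-1) x y) ⊔ T (chainVec n j (i+1) x y) := by
    intro i him hip
    have h1 : i - 1 < n := by omega
    have h2 : i < n := by omega
    set c : Fin n := ⟨i-1, h1⟩ with hc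
    set d : Fin n := ⟨i, h2⟩ with hd
    have hcd : c ≠ d := by
      rw [hc, hd]; intro hcontra; rw [Fin.mk.injEq] at hcontra; omega
    set w : Fin n → L := chainVec n j i x y with hw
    have E0 : Function.update (Function.update w c x) d y = w := by
      funext t; rcases t with ⟨tv, htv⟩
      simp only [Function.update_apply, hw, hc, hd, chainVec, Fin.mk.injEq, Fin.val_mk]
      split_ifs <;> first | rfl | (exfalso; omega) | (exfalso; simp only [Fin.val_mk, Fin.mk.injEq] at *; omega)
    have Exx : Function.update (Function.update w c x) d x = chainVec n j (i+1) x y := by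
      funext t; rcases t with ⟨tv, htv⟩
      simp only [Function.update_apply, hw, hc, hd, chainVec, Fin.mk.injEq, Fin.val_mk]
      split_ifs <;> first | rfl | (exfalso; omega) | (exfalso; simp only [Fin.val_mk, Fin.mk.injEq] at *; omega)
    have Eyy : Function.update (Function.update w c y) d y = chainVec n j (i-1) x y := by
      funext t; rcases t with ⟨tv, htv⟩
      simp only [Function.update_apply, hw, hc, hd, chainVec, Fin.mk.injEq, Fin.val_mk]
      split_ifs <;> first | rfl | (exfalso; omega) | (exfalso; simp only [Fin.val_mk, Fin.mk.injEq] at *; omega)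
    have hsymKey : T (Function.update (Function.update w c y) d x)
        = T (Function.update (Function.update w c x) d y) := by
      have hσ := hsymm (Equiv.swap c d) (Function.update (Function.update w c x) d y)
      rw [← hσ]
      congr 1
      funext t; rcases t with ⟨tv, htv⟩
      simp only [hw, hc, hd, Function.comp_apply, Equiv.swap_apply_def,
        Function.update_apply, chainVec, Fin.mk.injEq, Fin.val_mk]
      split_ifs <;> first | rfl | (exfalso; omega) | (exfalso; simp only [Fin.val_mk, Fin.mk.injEq] at *; omega)
    have := two_coord_ineq T hT w c d hcd x y hsymKey
    rw [E0, Exx, Eyy] at this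
    exact this.trans (sup_comm _ _).le
  apply le_antisymm
  · apply Finset.sup'_le
    intro i hi
    obtain ⟨him, hip⟩ := Finset.mem_Icc.mp hi
    have hB := stepB i him hip
    have hsplit : T (chainVec n j i x y)
        = (T (chainVec n j i x y) ⊓ T (chainVec n j (i-1) x y))
          ⊔ (T (chainVec n j i x y) ⊓ T (chainVec n j (i+1) x y)) := by
      rw [← inf_sup_left]
      exact (inf_eq_left.mpr hB).symm
    rw [hsplit]
    apply sup_le
    · have hEq : T (chainVec n j i x y) ⊓ T (chainVec n j (i-1) x y)
          = T (chainVec n (j+1) (i-1) x y) := by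
        rw [stepA (i-1) (by omega), show (i-1)+1 = i from by omega, inf_comm]
      rw [hEq]
      exact Finset.le_sup' (fun i => T (chainVec n (j+1) i x y))
        (show i - 1 ∈ Finset.Icc (m-1) p from Finset.mem_Icc.mpr ⟨by omega, by omega⟩)
    · rw [← stepA i hip]
      exact Finset.le_sup' (fun i => T (chainVec n (j+1) i x y))
        (show i ∈ Finset.Icc (m-1) p from Finset.mem_Icc.mpr ⟨by omega, hip⟩)
  · apply Finset.sup'_le
    intro k hk
    obtain ⟨hk1, hk2⟩ := Finset.mem_Icc.mp hk
    rw [stepA k hk2]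
    rcases lt_or_ge k m with h | h
    · refine le_trans inf_le_right ?_
      have hkm : k + 1 = m := by omega
      rw [hkm]
      exact Finset.le_sup' (fun i => T (chainVec n j i x y))
        (show m ∈ Finset.Icc m p from Finset.mem_Icc.mpr ⟨le_refl m, hmp⟩)
    · exact le_trans inf_le_left (Finset.le_sup' (fun i => T (chainVec n j i x y))
        (show k ∈ Finset.Icc m p from Finset.mem_Icc.mpr ⟨h, hk2⟩))
end

section
/- Let L and M be distributive lattices, n ≥ 2, and T : L^n → M a symmetric lattice n-homomorphism. Then the diagonal map P_T(x) := T(x,...,x) is a lattice homomorphism: P_T(x ∨ y) = P_T(x) ∨ P_T(y) and P_T(x ∧ y) = P_T(x) ∧ P_T(y) for all x, y ∈ L. -/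
section DiagonalAux

open Finset

set_option linter.unusedSectionVars false

variable {L M : Type*} [DistribLattice L] [DistribLattice M] {n : ℕ} {T : (Fin n → L) → M}

theorem Diag.expand_sup (hT : IsLatticeMultiHom T) (w : Fin n → L) (i : Fin n) (s t : L) :
    T (Function.update w i (s ⊔ t)) = T (Function.update w i s) ⊔ T (Function.update w i t) := by
  have h := (hT (Function.update w i s) i t).1
  simpa [Function.update_idem] using h

theorem Diag.expand_inf (hT : IsLatticeMultiHom T) (w : Fin n → L) (i : Fin n) (s t : L) :
    T (Function.update w i (s ⊓ t)) = T (Function.update w i s) ⊓ T (Function.update w i t) := by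
  have h := (hT (Function.update w i s) i t).2
  simpa [Function.update_idem] using h

theorem Diag.sup_expand (hT : IsLatticeMultiHom T) (x y : L) :
    ∀ (U : Finset (Fin n)) (f : Fin n → L), (∀ i ∈ U, f i = x ⊔ y) →
      T f = U.powerset.sup' (U.powerset_nonempty)
        (fun Q => T (fun i => if i ∈ Q then x else if i ∈ U then y else f i)) := by
  classical
  intro U
  induction U using Finset.induction_on with
  | empty =>
    intro f _
    refine Eq.trans ?_ (sup'_congr (singleton_nonempty _) (powerset_empty).symm fun Q _ => rfl)
    rw [sup'_singleton]
    simp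
  | @insert j U' hj ih =>
    intro f hf
    have hfj : f = Function.update f j (x ⊔ y) := by
      funext i
      rcases eq_or_ne i j with rfl | h
      · simp [hf i (mem_insert_self _ _)]
      · simp [Function.update_of_ne h]
    have hx : ∀ i ∈ U', Function.update f j x i = x ⊔ y := by
      intro i hi
      rw [Function.update_of_ne (by rintro rfl; exact hj hi)]
      exact hf i (mem_insert_of_mem hi)
    have hy : ∀ i ∈ U', Function.update f j y i = x ⊔ y := by
      intro i hi
      rw [Function.update_of_ne (by rintro rfl; exact hj hi)]
      exact hf i (mem_insert_of_mem hi)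
    have main := Diag.expand_sup hT f j x y
    rw [← hfj] at main
    rw [main, ih _ hx, ih _ hy]
    refine Eq.trans ?_ (sup'_congr (⟨∅, by simp⟩) (powerset_insert U' j).symm fun Q _ => rfl)
    rw [sup'_union (powerset_nonempty _) ((powerset_nonempty _).image _)]
    have h1 : U'.powerset.sup'  (powerset_nonempty _)
        (fun Q => T fun i => if i ∈ Q then x else if i ∈ U' then y else Function.update f j y i)
      = U'.powerset.sup' (powerset_nonempty _)
        (fun Q => T fun i => if i ∈ Q then x else if i ∈ insert j U' then y else f i) := by
      apply sup'_congr _ rfl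
      intro Q hQ
      rw [mem_powerset] at hQ
      congr 1
      funext i
      rcases eq_or_ne i j with rfl | h
      · have : i ∉ Q := fun hiQ => hj (hQ hiQ)
        simp [this, hj]
      · simp only [Function.update_of_ne h, mem_insert]
        by_cases hiQ : i ∈ Q <;> by_cases hiU : i ∈ U' <;> simp [hiQ, hiU, h]
    have h2 : U'.powerset.sup'  (powerset_nonempty _)
        (fun Q => T fun i => if i ∈ Q then x else if i ∈ U' then y else Function.update f j x i)
      = (U'.powerset.image (insert j)).sup' ((powerset_nonempty _).image _)
        (fun Q => T fun i => if i ∈ Q then x else if i ∈ insert j U' then y else f i) := by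
      rw [sup'_image]
      apply sup'_congr _ rfl
      intro Q hQ
      rw [mem_powerset] at hQ
      show T _ = T _
      congr 1
      funext i
      rcases eq_or_ne i j with rfl | h
      · have hiQ : i ∉ Q := fun hh => hj (hQ hh)
        simp [hiQ, hj]
      · simp only [Function.comp, Function.update_of_ne h, mem_insert]
        by_cases hiQ : i ∈ Q <;> by_cases hiU : i ∈ U' <;> simp [hiQ, hiU, h]
    rw [h1, h2, sup_comm]

theorem Diag.inf_expand (hT : IsLatticeMultiHom T) (x y : L) :
    ∀ (U : Finset (Fin n)) (f : Fin n → L), (∀ i ∈ U, f i = x ⊓ y) →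
      T f = U.powerset.inf' (U.powerset_nonempty)
        (fun Q => T (fun i => if i ∈ Q then x else if i ∈ U then y else f i)) := by
  classical
  intro U
  induction U using Finset.induction_on with
  | empty =>
    intro f _
    refine Eq.trans ?_ (inf'_congr (singleton_nonempty _) (powerset_empty).symm fun Q _ => rfl)
    rw [inf'_singleton]
    simp
  | @insert j U' hj ih =>
    intro f hf
    have hfj : f = Function.update f j (x ⊓ y) := by
      funext i
      rcases eq_or_ne i j with rfl | h
      · simp [hf i (mem_insert_self _ _)]
      · simp [Function.update_of_ne h]
    have hx : ∀ i ∈ U', Function.update f j x i = x ⊓ y := by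
      intro i hi
      rw [Function.update_of_ne (by rintro rfl; exact hj hi)]
      exact hf i (mem_insert_of_mem hi)
    have hy : ∀ i ∈ U', Function.update f j y i = x ⊓ y := by
      intro i hi
      rw [Function.update_of_ne (by rintro rfl; exact hj hi)]
      exact hf i (mem_insert_of_mem hi)
    have main := Diag.expand_inf hT f j x y
    rw [← hfj] at main
    rw [main, ih _ hx, ih _ hy]
    refine Eq.trans ?_ (inf'_congr (⟨∅, by simp⟩) (powerset_insert U' j).symm fun Q _ => rfl)
    rw [inf'_union (powerset_nonempty _) ((powerset_nonempty _).image _)]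
    have h1 : U'.powerset.inf'  (powerset_nonempty _)
        (fun Q => T fun i => if i ∈ Q then x else if i ∈ U' then y else Function.update f j y i)
      = U'.powerset.inf' (powerset_nonempty _)
        (fun Q => T fun i => if i ∈ Q then x else if i ∈ insert j U' then y else f i) := by
      apply inf'_congr _ rfl
      intro Q hQ
      rw [mem_powerset] at hQ
      congr 1
      funext i
      rcases eq_or_ne i j with rfl | h
      · have : i ∉ Q := fun hiQ => hj (hQ hiQ)
        simp [this, hj]
      · simp only [Function.update_of_ne h, mem_insert]
        by_cases hiQ : i ∈ Q <;> by_cases hiU : i ∈ U' <;> simp [hiQ, hiU, h]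
    have h2 : U'.powerset.inf'  (powerset_nonempty _)
        (fun Q => T fun i => if i ∈ Q then x else if i ∈ U' then y else Function.update f j x i)
      = (U'.powerset.image (insert j)).inf' ((powerset_nonempty _).image _)
        (fun Q => T fun i => if i ∈ Q then x else if i ∈ insert j U' then y else f i) := by
      rw [inf'_image]
      apply inf'_congr _ rfl
      intro Q hQ
      rw [mem_powerset] at hQ
      show T _ = T _
      congr 1
      funext i
      rcases eq_or_ne i j with rfl | h
      · have hiQ : i ∉ Q := fun hh => hj (hQ hh)
        simp [hiQ, hj]
      · simp only [Function.comp, Function.update_of_ne h, mem_insert]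
        by_cases hiQ : i ∈ Q <;> by_cases hiU : i ∈ U' <;> simp [hiQ, hiU, h]
    rw [h1, h2, inf_comm]

theorem Diag.T_chi_card (hsymm : IsSymmetricMap T) (x y : L) (S S' : Finset (Fin n))
    (h : S.card = S'.card) :
    T (fun i => if i ∈ S then x else y) = T (fun i => if i ∈ S' then x else y) := by
  classical
  have e1 : {i // i ∈ S} ≃ {i // i ∈ S'} := Fintype.equivOfCardEq (by
    simp [Fintype.card_coe, h])
  have e2 : {i // ¬ i ∈ S} ≃ {i // ¬ i ∈ S'} := Fintype.equivOfCardEq (by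
    simp [Fintype.card_subtype_compl, Fintype.card_coe, h])
  set σ : Equiv.Perm (Fin n) :=
    ((Equiv.sumCompl (· ∈ S)).symm.trans ((e1.sumCongr e2).trans
      (Equiv.sumCompl (· ∈ S')))) with hσ
  have hmem : ∀ i : Fin n, σ i ∈ S' ↔ i ∈ S := by
    intro i
    by_cases hi : i ∈ S
    · have : σ i = (e1 ⟨i, hi⟩ : {i // i ∈ S'}).1 := by
        simp [hσ, Equiv.sumCompl_symm_apply_of_pos hi]
      rw [this]
      exact iff_of_true (e1 ⟨i, hi⟩).2 hi
    · have : σ i = (e2 ⟨i, hi⟩ : {i // ¬ i ∈ S'}).1 := by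
        simp [hσ, Equiv.sumCompl_symm_apply_of_neg hi]
      rw [this]
      exact iff_of_false (e2 ⟨i, hi⟩).2 hi
  have : (fun i => if i ∈ S then x else y) = (fun i => if i ∈ S' then x else y) ∘ σ := by
    funext i
    simp only [Function.comp]
    by_cases hi : i ∈ S
    · simp [hi, (hmem i).mpr hi]
    · have h2 : σ i ∉ S' := fun hh => hi ((hmem i).mp hh)
      simp [hi, h2]
  rw [this, hsymm σ]

theorem Diag.sup'_powerset_card (s : Finset (Fin n)) (g : ℕ → M) :
    s.powerset.sup' (powerset_nonempty _) (fun Q => g Q.card)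
      = (range (s.card+1)).sup' nonempty_range_add_one g := by
  classical
  have himg : s.powerset.image Finset.card = range (s.card+1) := by
    ext k
    simp only [mem_image, mem_powerset, mem_range, Nat.lt_succ_iff]
    constructor
    · rintro ⟨Q, hQ, rfl⟩; exact card_le_card hQ
    · intro hk
      obtain ⟨t, ht, hc⟩ := exists_subset_card_eq hk
      exact ⟨t, ht, hc⟩
  refine Eq.trans ?_ (sup'_congr ((powerset_nonempty _).image _) himg fun Q _ => rfl)
  rw [sup'_image]
  rfl

theorem Diag.inf'_powerset_card (s : Finset (Fin n)) (g : ℕ → M) :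
    s.powerset.inf' (powerset_nonempty _) (fun Q => g Q.card)
      = (range (s.card+1)).inf' nonempty_range_add_one g := by
  classical
  have himg : s.powerset.image Finset.card = range (s.card+1) := by
    ext k
    simp only [mem_image, mem_powerset, mem_range, Nat.lt_succ_iff]
    constructor
    · rintro ⟨Q, hQ, rfl⟩; exact card_le_card hQ
    · intro hk
      obtain ⟨t, ht, hc⟩ := exists_subset_card_eq hk
      exact ⟨t, ht, hc⟩
  refine Eq.trans ?_ (inf'_congr ((powerset_nonempty _).image _) himg fun Q _ => rfl)
  rw [inf'_image]
  rfl

theorem Diag.card_filter_val_lt (k : ℕ) (hk : k ≤ n) :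
    ((univ : Finset (Fin n)).filter (fun j : Fin n => (j : ℕ) < k)).card = k := by
  classical
  have : ((univ : Finset (Fin n)).filter (fun j : Fin n => (j : ℕ) < k)).card
      = (range k).card := by
    refine Finset.card_bij' (fun (j : Fin n) _ => (j : ℕ))
      (fun (m : ℕ) (hm : m ∈ range k) => (⟨m, lt_of_lt_of_le (mem_range.mp hm) hk⟩ : Fin n))
      ?_ ?_ ?_ ?_
    · intro a ha; simpa using (mem_filter.mp ha).2
    · intro a ha; simp [mem_range.mp ha]
    · intro a ha; simp
    · intro a ha; simp
  rw [this, card_range]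

theorem Diag.windows {M : Type*} [DistribLattice M] (n : ℕ) (b : ℕ → M)
    (hI : ∀ a, a ≤ n →
      (range (a+1)).inf' nonempty_range_add_one
        (fun p => (range (n-a+1)).sup' nonempty_range_add_one (fun q => b (p+q)))
      = (range (n-a+1)).sup' nonempty_range_add_one
        (fun q => (range (a+1)).inf' nonempty_range_add_one (fun p => b (p+q)))) :
    ∀ w q, q + w ≤ n →
      (range (w+1)).inf' nonempty_range_add_one (fun p => b (q+p)) ≤ b 0 ⊔ b n := by
  have main : ∀ d w q, n - w ≤ d → q + w ≤ n →
      (range (w+1)).inf' nonempty_range_add_one (fun p => b (q+p)) ≤ b 0 ⊔ b n := by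
    intro d
    induction d with
    | zero =>
      intro w q hd h
      have hq : q = 0 := by omega
      subst hq
      refine le_trans (inf'_le _ (by simp : 0 ∈ range (w+1))) ?_
      simp
    | succ d ih =>
      intro w q hd h
      by_cases hq0 : q = 0
      · subst hq0
        refine le_trans (inf'_le _ (by simp : 0 ∈ range (w+1))) ?_
        simp
      by_cases hqn : q + w = n
      · refine le_trans (inf'_le _ (by simp : w ∈ range (w+1))) ?_
        rw [hqn]
        exact le_sup_right
      have hq1 : 1 ≤ q := by omega
      have hwn : w + 1 ≤ n := by omega
      have step1 : (range (w+1)).inf' nonempty_range_add_one (fun p => b (q+p))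
          ≤ (range (w+1+1)).inf' nonempty_range_add_one
              (fun p => (range (n-(w+1)+1)).sup' nonempty_range_add_one (fun q' => b (p+q'))) := by
        apply le_inf'
        intro p hp
        rw [mem_range] at hp
        have h1 : max p q - q < w + 1 := by omega
        have h2 : max p q - p < n - (w+1) + 1 := by omega
        refine le_trans (inf'_le _ (mem_range.mpr h1)) ?_
        refine le_trans
          (le_of_eq (congrArg b (by omega : q + (max p q - q) = p + (max p q - p)))) ?_
        exact le_sup' (fun q' => b (p + q')) (mem_range.mpr h2)
      refine le_trans step1 ?_
      rw [hI (w+1) hwn]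
      apply sup'_le
      intro q' hq'
      rw [mem_range] at hq'
      have : (range (w+1+1)).inf' nonempty_range_add_one (fun p => b (p + q'))
          = (range (w+1+1)).inf' nonempty_range_add_one (fun p => b (q' + p)) := by
        apply inf'_congr nonempty_range_add_one rfl
        intro p _
        exact congrArg b (by omega)
      rw [this]
      exact ih (w+1) q' (by omega) (by omega)
  intro w q h
  exact main (n - w) w q le_rfl h

theorem Diag.key (hn : 1 ≤ n) (hT : IsLatticeMultiHom T) (hsymm : IsSymmetricMap T) (x y : L) :
    (T fun _ => x ⊔ y) = (T fun _ => x) ⊔ (T fun _ => y) := by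
  classical
  set b : ℕ → M := fun k => T (fun i => if (i : ℕ) < k then x else y) with hbdef
  have hchi : ∀ S : Finset (Fin n), T (fun i => if i ∈ S then x else y) = b S.card := by
    intro S
    have hcard : S.card ≤ n := by
      have := card_le_card (subset_univ S)
      simpa [card_univ] using this
    have hrw : b S.card
        = T (fun i => if i ∈ ((univ : Finset (Fin n)).filter
            (fun j : Fin n => (j : ℕ) < S.card)) then x else y) := by
      simp only [hbdef]
      congr 1
      funext i
      simp
    rw [hrw]
    exact Diag.T_chi_card hsymm x y S _ (by rw [Diag.card_filter_val_lt _ hcard])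
  have hI : ∀ a, a ≤ n →
      (range (a+1)).inf' nonempty_range_add_one
        (fun p => (range (n-a+1)).sup' nonempty_range_add_one (fun q => b (p+q)))
      = (range (n-a+1)).sup' nonempty_range_add_one
        (fun q => (range (a+1)).inf' nonempty_range_add_one (fun p => b (p+q))) := by
    intro a ha
    set V := (univ : Finset (Fin n)).filter (fun j : Fin n => (j : ℕ) < a) with hV
    set U := (univ : Finset (Fin n)).filter (fun j : Fin n => ¬ (j : ℕ) < a) with hU
    have hVm : ∀ i : Fin n, i ∈ V ↔ (i : ℕ) < a := by intro i; simp [hV]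
    have hUm : ∀ i : Fin n, i ∈ U ↔ ¬ (i : ℕ) < a := by intro i; simp [hU]
    have hVcard : V.card = a := Diag.card_filter_val_lt a ha
    have hUcard : U.card = n - a := by
      have h1 := Finset.card_filter_add_card_filter_not
        (s := (univ : Finset (Fin n))) (p := fun j : Fin n => (j : ℕ) < a)
      rw [← hV, ← hU] at h1
      have h2 : (univ : Finset (Fin n)).card = n := by simp
      omega
    set f : Fin n → L := fun i => if (i : ℕ) < a then x ⊓ y else x ⊔ y with hf
    -- generic equality of the doubly-expanded tuple with a characteristic tuple
    have hfun : ∀ P Q : Finset (Fin n), P ⊆ V → Q ⊆ U →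
        (fun i => if i ∈ Q then x else if i ∈ U then y else
          (if i ∈ P then x else if i ∈ V then y else f i))
        = (fun i => if i ∈ P ∪ Q then x else y) := by
      intro P Q hP hQ
      funext i
      by_cases hiU : i ∈ U
      · have hiV : i ∉ V := fun hh => ((hUm i).mp hiU) ((hVm i).mp hh)
        have hiP : i ∉ P := fun hh => hiV (hP hh)
        by_cases hiQ : i ∈ Q <;> simp [hiQ, hiU, hiP, hiV, mem_union]
      · have hiV : i ∈ V := (hVm i).mpr (not_not.mp (fun hh => hiU ((hUm i).mpr hh)))
        have hiQ : i ∉ Q := fun hh => hiU (hQ hh)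
        by_cases hiP : i ∈ P <;> simp [hiQ, hiU, hiP, hiV, mem_union]
    have hfun2 : ∀ P Q : Finset (Fin n), P ⊆ V → Q ⊆ U →
        (fun i => if i ∈ P then x else if i ∈ V then y else
          (if i ∈ Q then x else if i ∈ U then y else f i))
        = (fun i => if i ∈ P ∪ Q then x else y) := by
      intro P Q hP hQ
      funext i
      by_cases hiU : i ∈ U
      · have hiV : i ∉ V := fun hh => ((hUm i).mp hiU) ((hVm i).mp hh)
        have hiP : i ∉ P := fun hh => hiV (hP hh)
        by_cases hiQ : i ∈ Q <;> simp [hiQ, hiU, hiP, hiV, mem_union]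
      · have hiV : i ∈ V := (hVm i).mpr (not_not.mp (fun hh => hiU ((hUm i).mpr hh)))
        have hiQ : i ∉ Q := fun hh => hiU (hQ hh)
        by_cases hiP : i ∈ P <;> simp [hiQ, hiU, hiP, hiV, mem_union]
    have hdisj : ∀ P Q : Finset (Fin n), P ⊆ V → Q ⊆ U → (P ∪ Q).card = P.card + Q.card := by
      intro P Q hP hQ
      apply card_union_of_disjoint
      refine Finset.disjoint_left.mpr ?_
      intro i hiP hiQ
      exact ((hUm i).mp (hQ hiQ)) ((hVm i).mp (hP hiP))
    -- first expansion order
    have E1 : T f = (range (a+1)).inf' nonempty_range_add_one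
        (fun p => (range (n-a+1)).sup' nonempty_range_add_one (fun q => b (p+q))) := by
      have e1 := Diag.inf_expand hT x y V f (by
        intro i hi; simp [hf, (hVm i).mp hi])
      rw [e1]
      have e2 : ∀ P ∈ V.powerset,
          T (fun i => if i ∈ P then x else if i ∈ V then y else f i)
          = (range (n-a+1)).sup' nonempty_range_add_one (fun q => b (P.card + q)) := by
        intro P hP
        rw [mem_powerset] at hP
        have e3 := Diag.sup_expand hT x y U
          (fun i => if i ∈ P then x else if i ∈ V then y else f i) (by
            intro i hi
            have hiV : i ∉ V := fun hh => ((hUm i).mp hi) ((hVm i).mp hh)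
            have hiP : i ∉ P := fun hh => hiV (hP hh)
            simp [hiP, hiV, hf, (hUm i).mp hi])
        rw [e3]
        have e4 : ∀ Q ∈ U.powerset,
            T (fun i => if i ∈ Q then x else if i ∈ U then y else
              (if i ∈ P then x else if i ∈ V then y else f i))
            = b (P.card + Q.card) := by
          intro Q hQ
          rw [mem_powerset] at hQ
          rw [hfun P Q hP hQ, hchi, hdisj P Q hP hQ]
        rw [sup'_congr (powerset_nonempty _) rfl e4]
        rw [Diag.sup'_powerset_card U (fun m => b (P.card + m)), hUcard]
      rw [inf'_congr (powerset_nonempty _) rfl e2]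
      rw [Diag.inf'_powerset_card V
        (fun p => (range (n-a+1)).sup' nonempty_range_add_one (fun q => b (p + q))), hVcard]
    -- second expansion order
    have E2 : T f = (range (n-a+1)).sup' nonempty_range_add_one
        (fun q => (range (a+1)).inf' nonempty_range_add_one (fun p => b (p+q))) := by
      have e1 := Diag.sup_expand hT x y U f (by
        intro i hi; simp [hf, (hUm i).mp hi])
      rw [e1]
      have e2 : ∀ Q ∈ U.powerset,
          T (fun i => if i ∈ Q then x else if i ∈ U then y else f i)
          = (range (a+1)).inf' nonempty_range_add_one (fun p => b (p + Q.card)) := by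
        intro Q hQ
        rw [mem_powerset] at hQ
        have e3 := Diag.inf_expand hT x y V
          (fun i => if i ∈ Q then x else if i ∈ U then y else f i) (by
            intro i hi
            have hiU : i ∉ U := fun hh => ((hUm i).mp hh) ((hVm i).mp hi)
            have hiQ : i ∉ Q := fun hh => hiU (hQ hh)
            simp [hiQ, hiU, hf, (hVm i).mp hi])
        rw [e3]
        have e4 : ∀ P ∈ V.powerset,
            T (fun i => if i ∈ P then x else if i ∈ V then y else
              (if i ∈ Q then x else if i ∈ U then y else f i))
            = b (P.card + Q.card) := by
          intro P hP
          rw [mem_powerset] at hP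
          rw [hfun2 P Q hP hQ, hchi, hdisj P Q hP hQ]
        rw [inf'_congr (powerset_nonempty _) rfl e4]
        rw [Diag.inf'_powerset_card V (fun m => b (m + Q.card)), hVcard]
      rw [sup'_congr (powerset_nonempty _) rfl e2]
      rw [Diag.sup'_powerset_card U
        (fun q => (range (a+1)).inf' nonempty_range_add_one (fun p => b (p + q))), hUcard]
    rw [← E1, E2]
  have hwin := Diag.windows n b hI
  have hb0 : b 0 = T (fun _ => y) := by
    simp only [hbdef]
    congr 1
  have hbn : b n = T (fun _ => x) := by
    simp only [hbdef]
    congr 1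
    funext i
    simp [i.isLt]
  have hTop : (T fun _ => x ⊔ y) = (range (n+1)).sup' nonempty_range_add_one b := by
    have e := Diag.sup_expand hT x y univ (fun _ => x ⊔ y) (by intro i _; rfl)
    rw [e]
    have e2 : ∀ Q ∈ (univ : Finset (Fin n)).powerset,
        T (fun i => if i ∈ Q then x else if i ∈ (univ : Finset (Fin n)) then y else x ⊔ y)
        = b Q.card := by
      intro Q _
      have : (fun i => if i ∈ Q then x else if i ∈ (univ : Finset (Fin n)) then y else x ⊔ y)
          = fun i => if i ∈ Q then x else y := by
        funext i; simp
      rw [this, hchi]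
    rw [sup'_congr (powerset_nonempty _) rfl e2]
    have e3 := Diag.sup'_powerset_card (univ : Finset (Fin n)) b
    rwa [card_univ, Fintype.card_fin] at e3
  rw [hTop]
  apply le_antisymm
  · apply sup'_le
    intro k hk
    rw [mem_range, Nat.lt_succ_iff] at hk
    have hw := hwin 0 k (by omega)
    have h1 : b k ≤ (range (0+1)).inf' nonempty_range_add_one (fun p => b (k+p)) := by
      apply le_inf'
      intro p hp
      rw [mem_range] at hp
      have hp0 : p = 0 := by omega
      subst hp0
      simp
    refine le_trans (le_trans h1 hw) ?_
    rw [hb0, hbn]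
    exact sup_le le_sup_right le_sup_left
  · apply sup_le
    · refine le_trans (le_of_eq hbn.symm) (le_sup' b ?_)
      simp
    · refine le_trans (le_of_eq hb0.symm) (le_sup' b ?_)
      simp

end DiagonalAux

/-- The diagonal of a symmetric lattice n-homomorphism between distributive lattices
is a lattice homomorphism. -/
theorem diagonal_isLatticeHom {L M : Type*} [DistribLattice L] [DistribLattice M]
    {n : ℕ} (hn : 2 ≤ n) (T : (Fin n → L) → M) (hT : IsLatticeMultiHom T)
    (hsymm : IsSymmetricMap T) (x y : L) :
    (T fun _ => x ⊔ y) = (T fun _ => x) ⊔ (T fun _ => y) ∧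
    (T fun _ => x ⊓ y) = (T fun _ => x) ⊓ (T fun _ => y) := by
  have hn1 : 1 ≤ n := le_trans (by norm_num) hn
  constructor
  · exact Diag.key hn1 hT hsymm x y
  · let T' : (Fin n → Lᵒᵈ) → Mᵒᵈ := T
    have hT' : IsLatticeMultiHom T' := fun z i w => ⟨(hT z i w).2, (hT z i w).1⟩
    have hsymm' : IsSymmetricMap T' := hsymm
    exact Diag.key (M := Mᵒᵈ) hn1 hT' hsymm' (OrderDual.toDual x) (OrderDual.toDual y)
end
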